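/- Let Δ be a set of pairwise disjoint non-degenerate closed subintervals of [0,1], C ⊆ [0,1], and F : Δ → C an order-preserving bijection. There exists a reparametrization φ of [0,1] whose set of stop intervals equals Δ and whose stop map equals F if and only if conditions (1)–(8) hold. -/

import Mathlib

open Set Classical

/-- A reparametrization of the unit interval: continuous, weakly increasing,
maps `[0,1]` into `[0,1]`, preserves endpoints. -/
def Reparam (φ : ℝ → ℝ) : Prop :=
  ContinuousOn φ (Set.Icc 0 1) ∧ MonotoneOn φ (Set.Icc 0 1) ∧
  Set.MapsTo φ (Set.Icc 0 1) (Set.Icc 0 1) ∧ φ 0 = 0 ∧ φ 1 = 1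

/-- `J` is a stop interval of `φ`: a non-degenerate preimage of a point. -/
def IsStopIntervalOf (φ : ℝ → ℝ) (J : Set ℝ) : Prop :=
  ∃ t : ℝ, Set.Icc 0 1 ∩ φ ⁻¹' {t} = J ∧ J.Nontrivial

/-- `t` is a stop value of `φ`. -/
def IsStopValueOf (φ : ℝ → ℝ) (t : ℝ) : Prop :=
  (Set.Icc 0 1 ∩ φ ⁻¹' {t}).Nontrivial

/-- The natural order on disjoint intervals: every point of `J` is below every point of `J'`. -/
def IntLT (J J' : Set ℝ) : Prop := ∀ x ∈ J, ∀ y ∈ J', x < y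

/-- Supremum with the convention that the sup of the empty family is `0`. -/
noncomputable def sSup0 (S : Set ℝ) : ℝ := if S.Nonempty then sSup S else 0

/-- Infimum with the convention that the inf of the empty family is `1`. -/
noncomputable def sInf1 (S : Set ℝ) : ℝ := if S.Nonempty then sInf S else 1

/-- Conditions (1)–(8) of the paper for a family `Δ` of intervals with
prospective stop map `F` (conventions: empty sup is `0`, empty inf is `1`). -/
def StopConditions (Δ : Set (Set ℝ)) (F : Set ℝ → ℝ) : Prop :=
  (∀ J ∈ Δ, sInf J = sSup0 {x | ∃ J' ∈ Δ, IntLT J' J ∧ x = sSup J'} →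
      F J = sSup0 {x | ∃ J' ∈ Δ, IntLT J' J ∧ x = F J'}) ∧
  (∀ J ∈ Δ, sSup J = sInf1 {x | ∃ J' ∈ Δ, IntLT J J' ∧ x = sInf J'} →
      F J = sInf1 {x | ∃ J' ∈ Δ, IntLT J J' ∧ x = F J'}) ∧
  (∀ z ∈ Set.Ioo (0:ℝ) 1,
      sSup0 {x | ∃ J' ∈ Δ, sSup J' < z ∧ x = sSup J'} =
        sInf1 {x | ∃ J'' ∈ Δ, z < sInf J'' ∧ x = sInf J''} →
      sSup0 {x | ∃ J' ∈ Δ, sSup J' < z ∧ x = F J'} =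
        sInf1 {x | ∃ J'' ∈ Δ, z < sInf J'' ∧ x = F J''}) ∧
  (∀ z ∈ Set.Ioo (0:ℝ) 1, (∀ J ∈ Δ, z ∉ J) →
      sSup0 {x | ∃ J' ∈ Δ, sSup J' < z ∧ x = sSup J'} <
        sInf1 {x | ∃ J'' ∈ Δ, z < sInf J'' ∧ x = sInf J''} →
      sSup0 {x | ∃ J' ∈ Δ, sSup J' < z ∧ x = F J'} <
        sInf1 {x | ∃ J'' ∈ Δ, z < sInf J'' ∧ x = F J''}) ∧
  (sInf1 {x | ∃ J ∈ Δ, x = sInf J} = 0 → sInf1 {x | ∃ J ∈ Δ, x = F J} = 0) ∧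
  ((∀ J ∈ Δ, (0:ℝ) ∉ J) → 0 < sInf1 {x | ∃ J ∈ Δ, x = sInf J} →
      0 < sInf1 {x | ∃ J ∈ Δ, x = F J}) ∧
  (sSup0 {x | ∃ J ∈ Δ, x = sSup J} = 1 → sSup0 {x | ∃ J ∈ Δ, x = F J} = 1) ∧
  ((∀ J ∈ Δ, (1:ℝ) ∉ J) → sSup0 {x | ∃ J ∈ Δ, x = sSup J} < 1 →
      sSup0 {x | ∃ J ∈ Δ, x = F J} < 1)


theorem sSup0_empty : sSup0 (∅ : Set ℝ) = 0 := by simp [sSup0]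

theorem sInf1_empty : sInf1 (∅ : Set ℝ) = 1 := by simp [sInf1]

theorem sSup0_le {S : Set ℝ} {y : ℝ} (hy : 0 ≤ y) (h : ∀ x ∈ S, x ≤ y) : sSup0 S ≤ y := by
  unfold sSup0; split
  · next hne => exact csSup_le hne h
  · exact hy

theorem le_sSup0 {S : Set ℝ} (hb : ∀ x ∈ S, x ≤ 1) {x : ℝ} (hx : x ∈ S) :
    x ≤ sSup0 S := by
  unfold sSup0
  rw [if_pos ⟨x, hx⟩]
  exact le_csSup ⟨1, hb⟩ hx

theorem sSup0_nonneg {S : Set ℝ} (h : ∀ x ∈ S, 0 ≤ x) : 0 ≤ sSup0 S := by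
  unfold sSup0; split
  · exact Real.sSup_nonneg h
  · exact le_refl _

theorem sInf1_le_one {S : Set ℝ} (h0 : ∀ x ∈ S, 0 ≤ x) (h1 : ∀ x ∈ S, x ≤ 1) :
    sInf1 S ≤ 1 := by
  unfold sInf1; split
  · next hne =>
    obtain ⟨x, hx⟩ := hne
    exact le_trans (csInf_le ⟨0, h0⟩ hx) (h1 x hx)
  · exact le_refl _

theorem exists_lt_of_lt_sSup0 {S : Set ℝ} {y : ℝ} (hy : 0 ≤ y) (h : y < sSup0 S) :
    ∃ x ∈ S, y < x := by
  unfold sSup0 at h; split at h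
  · next hne => exact exists_lt_of_lt_csSup hne h
  · exact absurd h (not_lt.mpr hy)

theorem sInf1_le {S : Set ℝ} (hb : ∀ x ∈ S, 0 ≤ x) {x : ℝ} (hx : x ∈ S) :
    sInf1 S ≤ x := by
  unfold sInf1
  rw [if_pos ⟨x, hx⟩]
  exact csInf_le ⟨0, hb⟩ hx

theorem le_sInf1 {S : Set ℝ} {y : ℝ} (hy : y ≤ 1) (h : ∀ x ∈ S, y ≤ x) : y ≤ sInf1 S := by
  unfold sInf1; split
  · next hne => exact le_csInf hne h
  · exact hy

theorem exists_sInf1_lt {S : Set ℝ} {y : ℝ} (hy : y ≤ 1) (h : sInf1 S < y) :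
    ∃ x ∈ S, x < y := by
  unfold sInf1 at h; split at h
  · next hne => exact exists_lt_of_csInf_lt hne h
  · exact absurd h (not_lt.mpr hy)
section Construction

variable (Δ : Set (Set ℝ)) (F : Set ℝ → ℝ)

/-- hypothesis: Δ consists of nondegenerate closed subintervals of [0,1] -/
def IntHyp : Prop := ∀ J ∈ Δ, ∃ a b : ℝ, 0 ≤ a ∧ a < b ∧ b ≤ 1 ∧ J = Set.Icc a b

noncomputable def gs (t : ℝ) : ℝ := sSup0 {x | ∃ J ∈ Δ, sSup J < t ∧ x = sSup J}
noncomputable def gi (t : ℝ) : ℝ := sInf1 {x | ∃ J ∈ Δ, t < sInf J ∧ x = sInf J}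
noncomputable def gL (t : ℝ) : ℝ := sSup0 {x | ∃ J ∈ Δ, sSup J < t ∧ x = F J}
noncomputable def gR (t : ℝ) : ℝ := sInf1 {x | ∃ J ∈ Δ, t < sInf J ∧ x = F J}

noncomputable def gphi (t : ℝ) : ℝ :=
  if h : ∃ J ∈ Δ, t ∈ J then F h.choose
  else if gs Δ t = gi Δ t then gL Δ F t
  else gL Δ F t + (gR Δ F t - gL Δ F t) * ((t - gs Δ t) / (gi Δ t - gs Δ t))

variable {Δ F}

theorem mem_setOf_bounds {g : Set ℝ → ℝ} (hg : ∀ J ∈ Δ, 0 ≤ g J ∧ g J ≤ 1)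
    {P : Set ℝ → Prop} : ∀ x ∈ {x | ∃ J ∈ Δ, P J ∧ x = g J}, 0 ≤ x ∧ x ≤ 1 := by
  rintro x ⟨J, hJ, _, rfl⟩; exact hg J hJ

theorem ivl_spec (hint : IntHyp Δ) {J : Set ℝ} (hJ : J ∈ Δ) :
    0 ≤ sInf J ∧ sInf J < sSup J ∧ sSup J ≤ 1 ∧ J = Set.Icc (sInf J) (sSup J) := by
  obtain ⟨a, b, ha, hab, hb, rfl⟩ := hint J hJ
  rw [csInf_Icc hab.le, csSup_Icc hab.le]
  exact ⟨ha, hab, hb, rfl⟩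

theorem sInf_mem_ivl (hint : IntHyp Δ) {J : Set ℝ} (hJ : J ∈ Δ) : sInf J ∈ J := by
  obtain ⟨_, h2, _, h4⟩ := ivl_spec hint hJ
  have h := Set.left_mem_Icc.mpr h2.le
  rwa [← h4] at h

theorem sSup_mem_ivl (hint : IntHyp Δ) {J : Set ℝ} (hJ : J ∈ Δ) : sSup J ∈ J := by
  obtain ⟨_, h2, _, h4⟩ := ivl_spec hint hJ
  have h := Set.right_mem_Icc.mpr h2.le
  rwa [← h4] at h

theorem mem_ivl_iff (hint : IntHyp Δ) {J : Set ℝ} (hJ : J ∈ Δ) {t : ℝ} :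
    t ∈ J ↔ sInf J ≤ t ∧ t ≤ sSup J := by
  conv_lhs => rw [(ivl_spec hint hJ).2.2.2]
  exact Set.mem_Icc

theorem ivl_endpoint_bounds (hint : IntHyp Δ) {g : Set ℝ → ℝ} (hg : g = sInf ∨ g = sSup) :
    ∀ J ∈ Δ, 0 ≤ g J ∧ g J ≤ 1 := by
  intro J hJ
  obtain ⟨h1, h2, h3, _⟩ := ivl_spec hint hJ
  rcases hg with rfl | rfl
  · exact ⟨h1, le_trans h2.le h3⟩
  · exact ⟨le_trans h1 h2.le, h3⟩

theorem intLT_of_endpoints (hint : IntHyp Δ) {J J' : Set ℝ} (hJ : J ∈ Δ) (hJ' : J' ∈ Δ)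
    (h : sSup J < sInf J') : IntLT J J' := by
  intro x hx y hy
  calc x ≤ sSup J := ((mem_ivl_iff hint hJ).mp hx).2
    _ < sInf J' := h
    _ ≤ y := ((mem_ivl_iff hint hJ').mp hy).1

theorem endpoints_of_intLT (hint : IntHyp Δ) {J J' : Set ℝ} (hJ : J ∈ Δ) (hJ' : J' ∈ Δ)
    (h : IntLT J J') : sSup J < sInf J' :=
  h _ (sSup_mem_ivl hint hJ) _ (sInf_mem_ivl hint hJ')

theorem ivl_unique (hdisj : Δ.Pairwise Disjoint) {J J' : Set ℝ} (hJ : J ∈ Δ) (hJ' : J' ∈ Δ)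
    {t : ℝ} (ht : t ∈ J) (ht' : t ∈ J') : J = J' := by
  by_contra hne
  exact Set.disjoint_left.mp (hdisj hJ hJ' hne) ht ht'

theorem ivl_tricho (hint : IntHyp Δ) (hdisj : Δ.Pairwise Disjoint) {J J' : Set ℝ}
    (hJ : J ∈ Δ) (hJ' : J' ∈ Δ) (hne : J ≠ J') : IntLT J J' ∨ IntLT J' J := by
  rcases lt_or_ge (sSup J) (sInf J') with h | h
  · exact Or.inl (intLT_of_endpoints hint hJ hJ' h)
  rcases lt_or_ge (sSup J') (sInf J) with h' | h'
  · exact Or.inr (intLT_of_endpoints hint hJ' hJ h')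
  exfalso
  have hm : max (sInf J) (sInf J') ∈ J := by
    rw [mem_ivl_iff hint hJ]
    exact ⟨le_max_left _ _, max_le (ivl_spec hint hJ).2.1.le h⟩
  have hm' : max (sInf J) (sInf J') ∈ J' := by
    rw [mem_ivl_iff hint hJ']
    exact ⟨le_max_right _ _, max_le h' (ivl_spec hint hJ').2.1.le⟩
  exact hne (ivl_unique hdisj hJ hJ' hm hm')

theorem not_mem_ivl_cases (hint : IntHyp Δ) {J : Set ℝ} (hJ : J ∈ Δ) {t : ℝ} (ht : t ∉ J) :
    t < sInf J ∨ sSup J < t := by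
  rw [mem_ivl_iff hint hJ] at ht
  rcases not_and_or.mp ht with h | h
  · exact Or.inl (not_le.mp h)
  · exact Or.inr (not_le.mp h)

end Construction
section Bounds

variable {Δ : Set (Set ℝ)} {F : Set ℝ → ℝ}

/-- F takes values in [0,1] -/
def FHyp (Δ : Set (Set ℝ)) (F : Set ℝ → ℝ) : Prop := ∀ J ∈ Δ, 0 ≤ F J ∧ F J ≤ 1

/-- F is order-preserving -/
def OrdHyp (Δ : Set (Set ℝ)) (F : Set ℝ → ℝ) : Prop :=
  ∀ J ∈ Δ, ∀ J' ∈ Δ, (IntLT J J' ↔ F J < F J')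

theorem set_congr {P Q : Set ℝ → Prop} (h : ∀ J ∈ Δ, (P J ↔ Q J)) (f : Set ℝ → ℝ) :
    {v | ∃ J ∈ Δ, P J ∧ v = f J} = {v | ∃ J ∈ Δ, Q J ∧ v = f J} := by
  ext v
  constructor
  · rintro ⟨J, hJ, hP, rfl⟩; exact ⟨J, hJ, (h J hJ).mp hP, rfl⟩
  · rintro ⟨J, hJ, hQ, rfl⟩; exact ⟨J, hJ, (h J hJ).mpr hQ, rfl⟩

theorem gs_nonneg (hint : IntHyp Δ) (t : ℝ) : 0 ≤ gs Δ t :=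
  sSup0_nonneg fun x hx =>
    (mem_setOf_bounds (ivl_endpoint_bounds hint (Or.inr rfl)) x hx).1

theorem gs_le {t : ℝ} (ht : 0 ≤ t) : gs Δ t ≤ t :=
  sSup0_le ht (by rintro x ⟨J, hJ, hlt, rfl⟩; exact hlt.le)

theorem le_gi {t : ℝ} (ht : t ≤ 1) : t ≤ gi Δ t :=
  le_sInf1 ht (by rintro x ⟨J, hJ, hlt, rfl⟩; exact hlt.le)

theorem gi_le_one (hint : IntHyp Δ) (t : ℝ) : gi Δ t ≤ 1 :=
  sInf1_le_one
    (fun x hx => (mem_setOf_bounds (ivl_endpoint_bounds hint (Or.inl rfl)) x hx).1)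
    (fun x hx => (mem_setOf_bounds (ivl_endpoint_bounds hint (Or.inl rfl)) x hx).2)

theorem gL_nonneg (hF : FHyp Δ F) (t : ℝ) : 0 ≤ gL Δ F t :=
  sSup0_nonneg fun x hx => (mem_setOf_bounds hF x hx).1

theorem gL_le_one (hF : FHyp Δ F) (t : ℝ) : gL Δ F t ≤ 1 :=
  sSup0_le zero_le_one fun x hx => (mem_setOf_bounds hF x hx).2

theorem gR_nonneg (hF : FHyp Δ F) (t : ℝ) : 0 ≤ gR Δ F t :=
  le_sInf1 zero_le_one fun x hx => (mem_setOf_bounds hF x hx).1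

theorem gR_le_one (hF : FHyp Δ F) (t : ℝ) : gR Δ F t ≤ 1 :=
  sInf1_le_one (fun x hx => (mem_setOf_bounds hF x hx).1)
    (fun x hx => (mem_setOf_bounds hF x hx).2)

theorem le_gL (hF : FHyp Δ F) {J : Set ℝ} (hJ : J ∈ Δ) {t : ℝ} (h : sSup J < t) :
    F J ≤ gL Δ F t :=
  le_sSup0 (fun x hx => (mem_setOf_bounds hF x hx).2) ⟨J, hJ, h, rfl⟩

theorem gR_le (hF : FHyp Δ F) {J : Set ℝ} (hJ : J ∈ Δ) {t : ℝ} (h : t < sInf J) :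
    gR Δ F t ≤ F J :=
  sInf1_le (fun x hx => (mem_setOf_bounds hF x hx).1) ⟨J, hJ, h, rfl⟩

theorem le_gs (hint : IntHyp Δ) {J : Set ℝ} (hJ : J ∈ Δ) {t : ℝ} (h : sSup J < t) :
    sSup J ≤ gs Δ t :=
  le_sSup0 (fun x hx => (mem_setOf_bounds (ivl_endpoint_bounds hint (Or.inr rfl)) x hx).2)
    ⟨J, hJ, h, rfl⟩

theorem gi_le (hint : IntHyp Δ) {J : Set ℝ} (hJ : J ∈ Δ) {t : ℝ} (h : t < sInf J) :
    gi Δ t ≤ sInf J :=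
  sInf1_le (fun x hx => (mem_setOf_bounds (ivl_endpoint_bounds hint (Or.inl rfl)) x hx).1)
    ⟨J, hJ, h, rfl⟩

theorem gL_le_gR (hint : IntHyp Δ) (hF : FHyp Δ F) (hFord : OrdHyp Δ F) (t : ℝ) :
    gL Δ F t ≤ gR Δ F t := by
  apply sSup0_le (gR_nonneg hF t)
  rintro x ⟨J', hJ', hlt', rfl⟩
  apply le_sInf1 (hF J' hJ').2
  rintro x ⟨J'', hJ'', hlt'', rfl⟩
  exact ((hFord J' hJ' J'' hJ'').mp
    (intLT_of_endpoints hint hJ' hJ'' (hlt'.trans hlt''))).le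

theorem gphi_eq_of_mem (hdisj : Δ.Pairwise Disjoint) {J : Set ℝ} (hJ : J ∈ Δ) {t : ℝ}
    (ht : t ∈ J) : gphi Δ F t = F J := by
  have h : ∃ J ∈ Δ, t ∈ J := ⟨J, hJ, ht⟩
  unfold gphi
  rw [dif_pos h]
  exact congrArg F (ivl_unique hdisj h.choose_spec.1 hJ h.choose_spec.2 ht)

theorem gphi_gap {t : ℝ} (hnm : ∀ J ∈ Δ, t ∉ J) :
    gphi Δ F t = if gs Δ t = gi Δ t then gL Δ F t
      else gL Δ F t + (gR Δ F t - gL Δ F t) * ((t - gs Δ t) / (gi Δ t - gs Δ t)) := by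
  unfold gphi
  rw [dif_neg]
  rintro ⟨J, hJ, ht⟩
  exact hnm J hJ ht

theorem gphi_gap_bounds (hint : IntHyp Δ) (hF : FHyp Δ F) (hFord : OrdHyp Δ F) {t : ℝ}
    (h0 : 0 ≤ t) (h1 : t ≤ 1) (hnm : ∀ J ∈ Δ, t ∉ J) :
    gL Δ F t ≤ gphi Δ F t ∧ gphi Δ F t ≤ gR Δ F t := by
  rw [gphi_gap hnm]
  split
  · exact ⟨le_rfl, gL_le_gR hint hF hFord t⟩
  · next hne =>
    have hsi : gs Δ t < gi Δ t :=
      lt_of_le_of_ne (le_trans (gs_le h0) (le_gi h1)) hne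
    have hr0 : 0 ≤ (t - gs Δ t) / (gi Δ t - gs Δ t) :=
      div_nonneg (sub_nonneg.mpr (gs_le h0)) (sub_nonneg.mpr hsi.le)
    have hr1 : (t - gs Δ t) / (gi Δ t - gs Δ t) ≤ 1 :=
      (div_le_one (sub_pos.mpr hsi)).mpr (sub_le_sub_right (le_gi h1) _)
    have hRL : 0 ≤ gR Δ F t - gL Δ F t := sub_nonneg.mpr (gL_le_gR hint hF hFord t)
    constructor
    · nlinarith
    · nlinarith

end Bounds
section Mono

variable {Δ : Set (Set ℝ)} {F : Set ℝ → ℝ}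

theorem not_exists_mem_ivl {t : ℝ} (h : ¬∃ J ∈ Δ, t ∈ J) : ∀ J ∈ Δ, t ∉ J :=
  fun J hJ ht => h ⟨J, hJ, ht⟩

theorem gap_congr (hint : IntHyp Δ) {x y : ℝ} (hxy : x ≤ y)
    (hxn : ∀ J ∈ Δ, x ∉ J) (hyn : ∀ J ∈ Δ, y ∉ J)
    (hbet : ¬∃ J ∈ Δ, x < sInf J ∧ sSup J < y) :
    gs Δ x = gs Δ y ∧ gi Δ x = gi Δ y ∧ gL Δ F x = gL Δ F y ∧ gR Δ F x = gR Δ F y := by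
  have hsup_iff : ∀ J ∈ Δ, (sSup J < x ↔ sSup J < y) := by
    intro J hJ
    constructor
    · exact fun h => lt_of_lt_of_le h hxy
    · intro h
      by_contra hc
      rcases not_mem_ivl_cases hint hJ (hxn J hJ) with h' | h'
      · exact hbet ⟨J, hJ, h', h⟩
      · exact hc h'
  have hinf_iff : ∀ J ∈ Δ, (x < sInf J ↔ y < sInf J) := by
    intro J hJ
    constructor
    · intro h
      rcases not_mem_ivl_cases hint hJ (hyn J hJ) with h' | h'
      · exact h'
      · exact absurd ⟨J, hJ, h, h'⟩ hbet
    · exact fun h => lt_of_le_of_lt hxy h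
  exact ⟨congrArg sSup0 (set_congr hsup_iff sSup), congrArg sInf1 (set_congr hinf_iff sInf),
    congrArg sSup0 (set_congr hsup_iff F), congrArg sInf1 (set_congr hinf_iff F)⟩

theorem gphi_mono (hint : IntHyp Δ) (hdisj : Δ.Pairwise Disjoint) (hF : FHyp Δ F)
    (hFord : OrdHyp Δ F) : MonotoneOn (gphi Δ F) (Set.Icc 0 1) := by
  intro x hx y hy hxy
  by_cases hxm : ∃ J ∈ Δ, x ∈ J
  · obtain ⟨J, hJ, hxJ⟩ := hxm
    rw [gphi_eq_of_mem hdisj hJ hxJ]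
    by_cases hym : ∃ J ∈ Δ, y ∈ J
    · obtain ⟨J', hJ', hyJ⟩ := hym
      rw [gphi_eq_of_mem hdisj hJ' hyJ]
      rcases eq_or_ne J J' with rfl | hne
      · exact le_rfl
      rcases ivl_tricho hint hdisj hJ hJ' hne with h | h
      · exact ((hFord J hJ J' hJ').mp h).le
      · exact absurd (h y hyJ x hxJ) (not_lt.mpr hxy)
    · have hyn := not_exists_mem_ivl hym
      have hsup : sSup J < y := by
        rcases not_mem_ivl_cases hint hJ (hyn J hJ) with h | h
        · exact absurd (lt_of_le_of_lt hxy (lt_of_lt_of_le h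
            ((mem_ivl_iff hint hJ).mp hxJ).1)) (lt_irrefl x)
        · exact h
      exact le_trans (le_gL hF hJ hsup) (gphi_gap_bounds hint hF hFord hy.1 hy.2 hyn).1
  · have hxn := not_exists_mem_ivl hxm
    by_cases hym : ∃ J ∈ Δ, y ∈ J
    · obtain ⟨J', hJ', hyJ⟩ := hym
      rw [gphi_eq_of_mem hdisj hJ' hyJ]
      have hinf : x < sInf J' := by
        rcases not_mem_ivl_cases hint hJ' (hxn J' hJ') with h | h
        · exact h
        · exact absurd (lt_of_le_of_lt (le_trans ((mem_ivl_iff hint hJ').mp hyJ).2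
            (le_of_lt h)) (lt_of_le_of_ne hxy (by rintro rfl; exact hxn J' hJ' hyJ)))
            (lt_irrefl y)
      exact le_trans (gphi_gap_bounds hint hF hFord hx.1 hx.2 hxn).2 (gR_le hF hJ' hinf)
    · have hyn := not_exists_mem_ivl hym
      by_cases hbet : ∃ J ∈ Δ, x < sInf J ∧ sSup J < y
      · obtain ⟨J, hJ, h1, h2⟩ := hbet
        calc gphi Δ F x ≤ gR Δ F x := (gphi_gap_bounds hint hF hFord hx.1 hx.2 hxn).2
          _ ≤ F J := gR_le hF hJ h1
          _ ≤ gL Δ F y := le_gL hF hJ h2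
          _ ≤ gphi Δ F y := (gphi_gap_bounds hint hF hFord hy.1 hy.2 hyn).1
      · obtain ⟨hgs, hgi, hgL, hgR⟩ := gap_congr (F := F) hint hxy hxn hyn hbet
        rw [gphi_gap hxn, gphi_gap hyn, ← hgs, ← hgi, ← hgL, ← hgR]
        rcases eq_or_lt_of_le (le_trans (gs_le hx.1) (le_gi hx.2)) with heq | hlt
        · rw [if_pos heq, if_pos heq]
        · rw [if_neg (ne_of_lt hlt), if_neg (ne_of_lt hlt)]
          have hRL : 0 ≤ gR Δ F x - gL Δ F x := sub_nonneg.mpr (gL_le_gR hint hF hFord x)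
          have hpos : 0 < gi Δ x - gs Δ x := sub_pos.mpr hlt
          have hdiv : (x - gs Δ x) / (gi Δ x - gs Δ x) ≤ (y - gs Δ x) / (gi Δ x - gs Δ x) :=
            (div_le_div_iff_of_pos_right hpos).mpr (sub_le_sub_right hxy _)
          exact add_le_add_right (mul_le_mul_of_nonneg_left hdiv hRL) _

end Mono
section Endpoints

variable {Δ : Set (Set ℝ)} {F : Set ℝ → ℝ}

theorem set_all_of {P : Set ℝ → Prop} (h : ∀ J ∈ Δ, P J) (f : Set ℝ → ℝ) :
    {x | ∃ J ∈ Δ, P J ∧ x = f J} = {x | ∃ J ∈ Δ, x = f J} := by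
  ext x
  constructor
  · rintro ⟨J, hJ, _, rfl⟩; exact ⟨J, hJ, rfl⟩
  · rintro ⟨J, hJ, rfl⟩; exact ⟨J, hJ, h J hJ, rfl⟩

theorem set_below_zero_empty (hint : IntHyp Δ) (f : Set ℝ → ℝ) :
    {x | ∃ J ∈ Δ, sSup J < 0 ∧ x = f J} = ∅ := by
  ext x
  simp only [Set.mem_setOf_eq, Set.mem_empty_iff_false, iff_false]
  rintro ⟨J, hJ, hlt, rfl⟩
  obtain ⟨h1, h2, _, _⟩ := ivl_spec hint hJ
  linarith

theorem set_above_one_empty (hint : IntHyp Δ) (f : Set ℝ → ℝ) :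
    {x | ∃ J ∈ Δ, 1 < sInf J ∧ x = f J} = ∅ := by
  ext x
  simp only [Set.mem_setOf_eq, Set.mem_empty_iff_false, iff_false]
  rintro ⟨J, hJ, hlt, rfl⟩
  obtain ⟨_, h2, h3, _⟩ := ivl_spec hint hJ
  linarith

theorem gphi_zero (hint : IntHyp Δ) (hdisj : Δ.Pairwise Disjoint)
    (c1 : ∀ J ∈ Δ, sInf J = sSup0 {x | ∃ J' ∈ Δ, IntLT J' J ∧ x = sSup J'} →
      F J = sSup0 {x | ∃ J' ∈ Δ, IntLT J' J ∧ x = F J'}) :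
    gphi Δ F 0 = 0 := by
  by_cases h : ∃ J ∈ Δ, 0 ∈ J
  · obtain ⟨J, hJ, h0⟩ := h
    rw [gphi_eq_of_mem hdisj hJ h0]
    have hempty : ∀ f : Set ℝ → ℝ, {x | ∃ J' ∈ Δ, IntLT J' J ∧ x = f J'} = ∅ := by
      intro f
      ext x
      simp only [Set.mem_setOf_eq, Set.mem_empty_iff_false, iff_false]
      rintro ⟨J', hJ', hLT, rfl⟩
      have := hLT (sSup J') (sSup_mem_ivl hint hJ') 0 h0
      obtain ⟨h1, h2, _, _⟩ := ivl_spec hint hJ'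
      linarith
    have hinf : sInf J = 0 :=
      le_antisymm ((mem_ivl_iff hint hJ).mp h0).1 (ivl_spec hint hJ).1
    rw [c1 J hJ (by rw [hempty, sSup0_empty, hinf]), hempty, sSup0_empty]
  · rw [gphi_gap (not_exists_mem_ivl h)]
    have hgs : gs Δ 0 = 0 := by
      unfold gs; rw [set_below_zero_empty hint, sSup0_empty]
    have hgL : gL Δ F 0 = 0 := by
      unfold gL; rw [set_below_zero_empty hint, sSup0_empty]
    split
    · exact hgL
    · rw [hgs, hgL, sub_zero, sub_zero, zero_div, mul_zero, add_zero]

theorem gphi_one (hint : IntHyp Δ) (hdisj : Δ.Pairwise Disjoint)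
    (c2 : ∀ J ∈ Δ, sSup J = sInf1 {x | ∃ J' ∈ Δ, IntLT J J' ∧ x = sInf J'} →
      F J = sInf1 {x | ∃ J' ∈ Δ, IntLT J J' ∧ x = F J'})
    (c7 : sSup0 {x | ∃ J ∈ Δ, x = sSup J} = 1 → sSup0 {x | ∃ J ∈ Δ, x = F J} = 1) :
    gphi Δ F 1 = 1 := by
  by_cases h : ∃ J ∈ Δ, 1 ∈ J
  · obtain ⟨J, hJ, h1⟩ := h
    rw [gphi_eq_of_mem hdisj hJ h1]
    have hempty : ∀ f : Set ℝ → ℝ, {x | ∃ J' ∈ Δ, IntLT J J' ∧ x = f J'} = ∅ := by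
      intro f
      ext x
      simp only [Set.mem_setOf_eq, Set.mem_empty_iff_false, iff_false]
      rintro ⟨J', hJ', hLT, rfl⟩
      have := hLT 1 h1 (sInf J') (sInf_mem_ivl hint hJ')
      obtain ⟨_, h2, h3, _⟩ := ivl_spec hint hJ'
      linarith
    have hsup : sSup J = 1 :=
      le_antisymm (ivl_spec hint hJ).2.2.1 ((mem_ivl_iff hint hJ).mp h1).2
    rw [c2 J hJ (by rw [hempty, sInf1_empty, hsup]), hempty, sInf1_empty]
  · have hn := not_exists_mem_ivl h
    rw [gphi_gap hn]
    have hgi : gi Δ 1 = 1 := by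
      unfold gi; rw [set_above_one_empty hint, sInf1_empty]
    have hgR : gR Δ F 1 = 1 := by
      unfold gR; rw [set_above_one_empty hint, sInf1_empty]
    have hlt1 : ∀ J ∈ Δ, sSup J < 1 := by
      intro J hJ
      exact lt_of_le_of_ne (ivl_spec hint hJ).2.2.1
        (fun he => hn J hJ (he ▸ sSup_mem_ivl hint hJ))
    split
    · next heq =>
      have hgs : gs Δ 1 = sSup0 {x | ∃ J ∈ Δ, x = sSup J} := by
        unfold gs; rw [set_all_of hlt1 sSup]
      have : gL Δ F 1 = sSup0 {x | ∃ J ∈ Δ, x = F J} := by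
        unfold gL; rw [set_all_of hlt1 F]
      rw [this, c7 (by rw [← hgs, heq, hgi])]
    · next hne =>
      rw [hgi] at hne ⊢
      rw [div_self (sub_ne_zero.mpr (Ne.symm hne)), mul_one, add_sub_cancel, hgR]

end Endpoints
section Level

variable {Δ : Set (Set ℝ)} {F : Set ℝ → ℝ}

theorem gphi_gap_lt {t : ℝ} (hn : ∀ J ∈ Δ, t ∉ J) (hne : gs Δ t ≠ gi Δ t) :
    gphi Δ F t = gL Δ F t + (gR Δ F t - gL Δ F t) * ((t - gs Δ t) / (gi Δ t - gs Δ t)) := by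
  rw [gphi_gap hn, if_neg hne]

theorem gphi_gap_eqc {t : ℝ} (hn : ∀ J ∈ Δ, t ∉ J) (heq : gs Δ t = gi Δ t) :
    gphi Δ F t = gL Δ F t := by
  rw [gphi_gap hn, if_pos heq]

theorem gs_zero (hint : IntHyp Δ) : gs Δ 0 = 0 := by
  unfold gs; rw [set_below_zero_empty hint, sSup0_empty]

theorem gL_zero (hint : IntHyp Δ) : gL Δ F 0 = 0 := by
  unfold gL; rw [set_below_zero_empty hint, sSup0_empty]

theorem gi_one (hint : IntHyp Δ) : gi Δ 1 = 1 := by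
  unfold gi; rw [set_above_one_empty hint, sInf1_empty]

theorem gR_one (hint : IntHyp Δ) : gR Δ F 1 = 1 := by
  unfold gR; rw [set_above_one_empty hint, sInf1_empty]

theorem sup_lt_one_of_not_mem (hint : IntHyp Δ) (hn : ∀ J ∈ Δ, (1:ℝ) ∉ J) :
    ∀ J ∈ Δ, sSup J < 1 := fun J hJ =>
  lt_of_le_of_ne (ivl_spec hint hJ).2.2.1 (fun he => hn J hJ (he ▸ sSup_mem_ivl hint hJ))

theorem zero_lt_inf_of_not_mem (hint : IntHyp Δ) (hn : ∀ J ∈ Δ, (0:ℝ) ∉ J) :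
    ∀ J ∈ Δ, 0 < sInf J := fun J hJ =>
  lt_of_le_of_ne (ivl_spec hint hJ).1 (fun he => hn J hJ (he ▸ sInf_mem_ivl hint hJ))

theorem lt_gphi_of_gt (hint : IntHyp Δ) (hdisj : Δ.Pairwise Disjoint) (hF : FHyp Δ F)
    (hFord : OrdHyp Δ F)
    (c4 : ∀ z ∈ Set.Ioo (0:ℝ) 1, (∀ J ∈ Δ, z ∉ J) →
      sSup0 {x | ∃ J' ∈ Δ, sSup J' < z ∧ x = sSup J'} <
        sInf1 {x | ∃ J'' ∈ Δ, z < sInf J'' ∧ x = sInf J''} →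
      sSup0 {x | ∃ J' ∈ Δ, sSup J' < z ∧ x = F J'} <
        sInf1 {x | ∃ J'' ∈ Δ, z < sInf J'' ∧ x = F J''})
    (c8 : (∀ J ∈ Δ, (1:ℝ) ∉ J) → sSup0 {x | ∃ J ∈ Δ, x = sSup J} < 1 →
      sSup0 {x | ∃ J ∈ Δ, x = F J} < 1)
    {J : Set ℝ} (hJ : J ∈ Δ) {x : ℝ} (hx : x ∈ Set.Icc (0:ℝ) 1)
    (hn : ∀ J ∈ Δ, x ∉ J) (hsup : sSup J < x) : F J < gphi Δ F x := by
  obtain ⟨hJ0, hJlt, hJ1, _⟩ := ivl_spec hint hJ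
  have hsups : 0 ≤ sSup J := le_trans hJ0 hJlt.le
  have hgs_ge : sSup J ≤ gs Δ x := le_gs hint hJ hsup
  rcases eq_or_lt_of_le hgs_ge with heq | hlt
  · -- gs x = sSup J
    have hgsx : gs Δ x < x := heq ▸ hsup
    have hne : gs Δ x ≠ gi Δ x := fun he =>
      absurd (le_gi hx.2) (not_le.mpr (he ▸ hgsx))
    have hsi : gs Δ x < gi Δ x := lt_of_le_of_ne (le_trans (gs_le hx.1) (le_gi hx.2)) hne
    rw [gphi_gap_lt hn hne]
    have hFL : F J ≤ gL Δ F x := le_gL hF hJ hsup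
    rcases eq_or_lt_of_le hx.2 with hx1 | hx1
    · -- x = 1
      subst hx1
      have hFJ1 : F J < 1 := by
        have hall := sup_lt_one_of_not_mem hint hn
        have hgs1 : sSup0 {x | ∃ J ∈ Δ, x = sSup J} < 1 := by
          rw [← set_all_of hall sSup]
          exact hgsx
        have hle : F J ≤ sSup0 {x | ∃ J ∈ Δ, x = F J} :=
          le_sSup0 (by rintro x ⟨J', hJ', rfl⟩; exact (hF J' hJ').2) ⟨J, hJ, rfl⟩
        exact lt_of_le_of_lt hle (c8 hn hgs1)
      rw [gi_one hint, div_self (sub_ne_zero.mpr (ne_of_gt hgsx)), mul_one,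
        add_sub_cancel, gR_one hint]
      exact hFJ1
    · -- x < 1
      have hx0 : 0 < x := lt_of_le_of_lt hsups hsup
      have hLR : gL Δ F x < gR Δ F x := c4 x ⟨hx0, hx1⟩ hn hsi
      have hr : 0 < (x - gs Δ x) / (gi Δ x - gs Δ x) :=
        div_pos (sub_pos.mpr hgsx) (sub_pos.mpr hsi)
      nlinarith
  · -- sSup J < gs x
    obtain ⟨x', hx', hgt⟩ := exists_lt_of_lt_sSup0 hsups hlt
    obtain ⟨J', hJ', hx'lt, rfl⟩ := hx'
    have hne : J ≠ J' := fun e => absurd hgt (e ▸ lt_irrefl _)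
    have hLT : IntLT J J' := by
      rcases ivl_tricho hint hdisj hJ hJ' hne with h | h
      · exact h
      · exact absurd (lt_trans (lt_of_lt_of_le (endpoints_of_intLT hint hJ' hJ h)
          hJlt.le) hgt) (lt_irrefl _)
    calc F J < F J' := (hFord J hJ J' hJ').mp hLT
      _ ≤ gL Δ F x := le_gL hF hJ' hx'lt
      _ ≤ gphi Δ F x := (gphi_gap_bounds hint hF hFord hx.1 hx.2 hn).1

end Level
section Level2

variable {Δ : Set (Set ℝ)} {F : Set ℝ → ℝ}

theorem gphi_lt_of_lt (hint : IntHyp Δ) (hdisj : Δ.Pairwise Disjoint) (hF : FHyp Δ F)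
    (hFord : OrdHyp Δ F)
    (c4 : ∀ z ∈ Set.Ioo (0:ℝ) 1, (∀ J ∈ Δ, z ∉ J) →
      sSup0 {x | ∃ J' ∈ Δ, sSup J' < z ∧ x = sSup J'} <
        sInf1 {x | ∃ J'' ∈ Δ, z < sInf J'' ∧ x = sInf J''} →
      sSup0 {x | ∃ J' ∈ Δ, sSup J' < z ∧ x = F J'} <
        sInf1 {x | ∃ J'' ∈ Δ, z < sInf J'' ∧ x = F J''})
    (c6 : (∀ J ∈ Δ, (0:ℝ) ∉ J) → 0 < sInf1 {x | ∃ J ∈ Δ, x = sInf J} →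
      0 < sInf1 {x | ∃ J ∈ Δ, x = F J})
    {J : Set ℝ} (hJ : J ∈ Δ) {x : ℝ} (hx : x ∈ Set.Icc (0:ℝ) 1)
    (hn : ∀ J ∈ Δ, x ∉ J) (hinf : x < sInf J) : gphi Δ F x < F J := by
  obtain ⟨hJ0, hJlt, hJ1, _⟩ := ivl_spec hint hJ
  have hinf1 : sInf J ≤ 1 := hJlt.le.trans hJ1
  have hgi_le : gi Δ x ≤ sInf J := gi_le hint hJ hinf
  rcases eq_or_lt_of_le hgi_le with heq | hlt
  · -- gi x = sInf J
    have hgix : x < gi Δ x := heq ▸ hinf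
    have hne : gs Δ x ≠ gi Δ x := fun he =>
      absurd (gs_le hx.1) (not_le.mpr (he ▸ hgix))
    have hsi : gs Δ x < gi Δ x := lt_of_le_of_ne (le_trans (gs_le hx.1) (le_gi hx.2)) hne
    rw [gphi_gap_lt hn hne]
    have hRF : gR Δ F x ≤ F J := gR_le hF hJ hinf
    rcases eq_or_lt_of_le hx.1 with hx0 | hx0
    · -- x = 0
      have hx0' : x = 0 := hx0.symm
      subst hx0'
      have h0lt := zero_lt_inf_of_not_mem hint hn
      have hgi0 : 0 < sInf1 {x | ∃ J ∈ Δ, x = sInf J} := by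
        rw [← set_all_of h0lt sInf]
        exact lt_of_le_of_lt hx.1 hgix
      have hFJ0 : 0 < F J := by
        have hle : sInf1 {x | ∃ J ∈ Δ, x = F J} ≤ F J :=
          sInf1_le (by rintro x ⟨J', hJ', rfl⟩; exact (hF J' hJ').1) ⟨J, hJ, rfl⟩
        exact lt_of_lt_of_le (c6 hn hgi0) hle
      rw [gs_zero hint, gL_zero hint, sub_zero, sub_zero, zero_div, mul_zero, add_zero]
      exact hFJ0
    · -- 0 < x
      have hx1 : x < 1 := lt_trans hinf (lt_of_lt_of_le hJlt hJ1)
      have hLR : gL Δ F x < gR Δ F x := c4 x ⟨hx0, hx1⟩ hn hsi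
      have hr1 : (x - gs Δ x) / (gi Δ x - gs Δ x) < 1 :=
        (div_lt_one (sub_pos.mpr hsi)).mpr (sub_lt_sub_right hgix _)
      have hr0 : 0 ≤ (x - gs Δ x) / (gi Δ x - gs Δ x) :=
        div_nonneg (sub_nonneg.mpr (gs_le hx.1)) (sub_nonneg.mpr hsi.le)
      nlinarith
  · -- gi x < sInf J
    obtain ⟨x', hx', hgt⟩ := exists_sInf1_lt hinf1 hlt
    obtain ⟨J'', hJ'', hx'gt, rfl⟩ := hx'
    have hne : J'' ≠ J := fun e => absurd hgt (e ▸ lt_irrefl _)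
    have hLT : IntLT J'' J := by
      rcases ivl_tricho hint hdisj hJ'' hJ hne with h | h
      · exact h
      · exact absurd (lt_trans (lt_of_le_of_lt (endpoints_of_intLT hint hJ hJ'' h).le hgt)
          (lt_of_lt_of_le hJlt le_rfl)) (lt_irrefl _)
    calc gphi Δ F x ≤ gR Δ F x := (gphi_gap_bounds hint hF hFord hx.1 hx.2 hn).2
      _ ≤ F J'' := gR_le hF hJ'' hx'gt
      _ < F J := (hFord J'' hJ'' J hJ).mp hLT

end Level2
section StopSets

variable {Δ : Set (Set ℝ)} {F : Set ℝ → ℝ}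

theorem ivl_subset_unit (hint : IntHyp Δ) {J : Set ℝ} (hJ : J ∈ Δ) :
    J ⊆ Set.Icc 0 1 := by
  intro x hx
  obtain ⟨h1, h2, h3, _⟩ := ivl_spec hint hJ
  rw [mem_ivl_iff hint hJ] at hx
  exact ⟨le_trans h1 hx.1, le_trans hx.2 h3⟩

theorem gphi_level (hint : IntHyp Δ) (hdisj : Δ.Pairwise Disjoint) (hF : FHyp Δ F)
    (hFord : OrdHyp Δ F)
    (c4 : ∀ z ∈ Set.Ioo (0:ℝ) 1, (∀ J ∈ Δ, z ∉ J) →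
      sSup0 {x | ∃ J' ∈ Δ, sSup J' < z ∧ x = sSup J'} <
        sInf1 {x | ∃ J'' ∈ Δ, z < sInf J'' ∧ x = sInf J''} →
      sSup0 {x | ∃ J' ∈ Δ, sSup J' < z ∧ x = F J'} <
        sInf1 {x | ∃ J'' ∈ Δ, z < sInf J'' ∧ x = F J''})
    (c6 : (∀ J ∈ Δ, (0:ℝ) ∉ J) → 0 < sInf1 {x | ∃ J ∈ Δ, x = sInf J} →
      0 < sInf1 {x | ∃ J ∈ Δ, x = F J})
    (c8 : (∀ J ∈ Δ, (1:ℝ) ∉ J) → sSup0 {x | ∃ J ∈ Δ, x = sSup J} < 1 →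
      sSup0 {x | ∃ J ∈ Δ, x = F J} < 1)
    {J : Set ℝ} (hJ : J ∈ Δ) :
    Set.Icc 0 1 ∩ gphi Δ F ⁻¹' {F J} = J := by
  ext x
  constructor
  · rintro ⟨hx, hpre⟩
    rw [Set.mem_preimage, Set.mem_singleton_iff] at hpre
    by_contra hxJ
    by_cases hm : ∃ J' ∈ Δ, x ∈ J'
    · obtain ⟨J', hJ', hxJ'⟩ := hm
      rw [gphi_eq_of_mem hdisj hJ' hxJ'] at hpre
      have hne : J' ≠ J := fun e => hxJ (e ▸ hxJ')
      rcases ivl_tricho hint hdisj hJ' hJ hne with h | h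
      · exact absurd hpre (ne_of_lt ((hFord J' hJ' J hJ).mp h))
      · exact absurd hpre.symm (ne_of_lt ((hFord J hJ J' hJ').mp h))
    · have hn := not_exists_mem_ivl hm
      rcases not_mem_ivl_cases hint hJ hxJ with h | h
      · exact absurd hpre (ne_of_lt (gphi_lt_of_lt hint hdisj hF hFord c4 c6 hJ hx hn h))
      · exact absurd hpre.symm
          (ne_of_lt (lt_gphi_of_gt hint hdisj hF hFord c4 c8 hJ hx hn h))
  · intro hxJ
    exact ⟨ivl_subset_unit hint hJ hxJ, by
      rw [Set.mem_preimage, Set.mem_singleton_iff]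
      exact gphi_eq_of_mem hdisj hJ hxJ⟩

theorem level_mem_delta (hint : IntHyp Δ) (hdisj : Δ.Pairwise Disjoint) (hF : FHyp Δ F)
    (hFord : OrdHyp Δ F)
    (c4 : ∀ z ∈ Set.Ioo (0:ℝ) 1, (∀ J ∈ Δ, z ∉ J) →
      sSup0 {x | ∃ J' ∈ Δ, sSup J' < z ∧ x = sSup J'} <
        sInf1 {x | ∃ J'' ∈ Δ, z < sInf J'' ∧ x = sInf J''} →
      sSup0 {x | ∃ J' ∈ Δ, sSup J' < z ∧ x = F J'} <
        sInf1 {x | ∃ J'' ∈ Δ, z < sInf J'' ∧ x = F J''})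
    {x y : ℝ} (hx : x ∈ Set.Icc (0:ℝ) 1) (hy : y ∈ Set.Icc (0:ℝ) 1) (hxy : x < y)
    (heq : gphi Δ F x = gphi Δ F y) : ∃ J ∈ Δ, x ∈ J ∧ y ∈ J := by
  have hmono := gphi_mono hint hdisj hF hFord
  have hconst : ∀ w ∈ Set.Icc x y, gphi Δ F w = gphi Δ F x := by
    intro w hw
    have hwI : w ∈ Set.Icc (0:ℝ) 1 := ⟨le_trans hx.1 hw.1, le_trans hw.2 hy.2⟩
    refine le_antisymm ?_ (hmono hx hwI hw.1)
    rw [heq]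
    exact hmono hwI hy hw.2
  -- Claim A: every interior point lies in some interval of Δ
  have hcont : ∀ z ∈ Set.Ioo x y, ∃ J ∈ Δ, z ∈ J := by
    intro z hz
    by_contra hm
    have hn := not_exists_mem_ivl hm
    have hzI : z ∈ Set.Icc (0:ℝ) 1 := ⟨le_trans hx.1 hz.1.le, le_trans hz.2.le hy.2⟩
    rcases eq_or_lt_of_le (le_trans (gs_le hzI.1) (le_gi hzI.2)) with hsi | hsi
    · -- gs z = gi z (= z): intervals accumulate to z from both sides
      have hgsz : gs Δ z = z := le_antisymm (gs_le hzI.1) (le_of_le_of_eq (le_gi hzI.2) hsi.symm)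
      have hgiz : gi Δ z = z := by rw [← hsi, hgsz]
      obtain ⟨x', hx', hgt⟩ := exists_lt_of_lt_sSup0 hx.1
        (show x < gs Δ z by rw [hgsz]; exact hz.1)
      obtain ⟨J', hJ', hltz, rfl⟩ := hx'
      obtain ⟨x'', hx'', hgt''⟩ := exists_sInf1_lt hy.2
        (show gi Δ z < y by rw [hgiz]; exact hz.2)
      obtain ⟨J'', hJ'', hgtz, rfl⟩ := hx''
      have h1 : gphi Δ F (sSup J') = F J' :=
        gphi_eq_of_mem hdisj hJ' (sSup_mem_ivl hint hJ')
      have h2 : gphi Δ F (sInf J'') = F J'' :=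
        gphi_eq_of_mem hdisj hJ'' (sInf_mem_ivl hint hJ'')
      have hv1 : gphi Δ F (sSup J') = gphi Δ F x :=
        hconst _ ⟨hgt.le, le_trans hltz.le hz.2.le⟩
      have hv2 : gphi Δ F (sInf J'') = gphi Δ F x :=
        hconst _ ⟨le_trans hz.1.le hgtz.le, hgt''.le⟩
      have hlt : F J' < F J'' := (hFord J' hJ' J'' hJ'').mp
        (intLT_of_endpoints hint hJ' hJ'' (lt_trans hltz hgtz))
      rw [← h1, ← h2, hv1, hv2] at hlt
      exact lt_irrefl _ hlt
    · -- gs z < gi z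
      have hgap_nomem : ∀ w, gs Δ z < w → w < gi Δ z → ∀ J ∈ Δ, w ∉ J := by
        intro w hw1 hw2 J hJ hwJ
        rcases not_mem_ivl_cases hint hJ (hn J hJ) with h | h
        · exact absurd ((mem_ivl_iff hint hJ).mp hwJ).1
            (not_le.mpr (lt_of_lt_of_le hw2 (gi_le hint hJ h)))
        · exact absurd ((mem_ivl_iff hint hJ).mp hwJ).2
            (not_le.mpr (lt_of_le_of_lt (le_gs hint hJ h) hw1))
      -- find two suitable points w1 < w2
      obtain ⟨w1, w2, hw1M, hw2M, h12, hn1, hn2, hbet, h01, hsi1⟩ :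
          ∃ w1 w2 : ℝ, w1 ∈ Set.Icc x y ∧ w2 ∈ Set.Icc x y ∧ w1 < w2 ∧
            (∀ J ∈ Δ, w1 ∉ J) ∧ (∀ J ∈ Δ, w2 ∉ J) ∧
            (¬∃ J ∈ Δ, w1 < sInf J ∧ sSup J < w2) ∧ w1 ∈ Set.Ioo (0:ℝ) 1 ∧
            gs Δ w1 < gi Δ w1 := by
        rcases eq_or_lt_of_le (gs_le hzI.1) with hgsz | hgsz
        · -- gs z = z, so z < gi z ; take w1 = z, w2 in (z, min y (gi z))
          have hzgi : z < gi Δ z := by rw [hgsz] at hsi; exact hsi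
          have hminz : z < min y (gi Δ z) := lt_min hz.2 hzgi
          set w := (z + min y (gi Δ z))/2 with hwdef
          have hwz : z < w := by rw [hwdef]; linarith
          have hwy : w < y := by
            have h1 : min y (gi Δ z) ≤ y := min_le_left _ _
            rw [hwdef]; linarith [hz.2]
          have hwgi : w < gi Δ z := by
            have h1 : min y (gi Δ z) ≤ gi Δ z := min_le_right _ _
            rw [hwdef]; linarith
          have hnw : ∀ J ∈ Δ, w ∉ J := fun J hJ =>
            hgap_nomem w (by rw [hgsz]; exact hwz) hwgi J hJ
          have hbetzw : ¬∃ J ∈ Δ, z < sInf J ∧ sSup J < w := by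
            rintro ⟨J, hJ, hlt1, hlt2⟩
            have h1 := gi_le hint hJ hlt1
            have h2 : sInf J ≤ sSup J := (ivl_spec hint hJ).2.1.le
            linarith
          refine ⟨z, w, ⟨hz.1.le, hz.2.le⟩, ⟨le_trans hz.1.le hwz.le, hwy.le⟩, hwz, hn, hnw,
            hbetzw, ⟨lt_of_le_of_lt hx.1 hz.1, lt_of_lt_of_le hz.2 hy.2⟩, ?_⟩
          rw [hgsz] at hsi ⊢
          exact hsi
        · -- gs z < z : take w1 in (max x (gs z), z), w2 = z
          have hmx : max x (gs Δ z) < z := max_lt hz.1 hgsz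
          set w := (max x (gs Δ z) + z)/2 with hw
          have hw1 : max x (gs Δ z) < w := by rw [hw]; linarith
          have hw2 : w < z := by rw [hw]; linarith
          have hwgs : gs Δ z < w := lt_of_le_of_lt (le_max_right _ _) hw1
          have hwx : x < w := lt_of_le_of_lt (le_max_left _ _) hw1
          have hnw : ∀ J ∈ Δ, w ∉ J := fun J hJ =>
            hgap_nomem w hwgs (lt_of_lt_of_le hw2 (le_gi hzI.2)) J hJ
          have hbetwz : ¬∃ J ∈ Δ, w < sInf J ∧ sSup J < z := by
            rintro ⟨J, hJ, hlt1, hlt2⟩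
            have := le_gs hint hJ hlt2
            have h1 : sInf J ≤ sSup J := (ivl_spec hint hJ).2.1.le
            linarith
          have hdata := gap_congr (F := F) hint hw2.le hnw hn hbetwz
          refine ⟨w, z, ⟨hwx.le, le_trans hw2.le hz.2.le⟩, ⟨hz.1.le, hz.2.le⟩, hw2, hnw, hn,
            hbetwz, ⟨lt_of_le_of_lt hx.1 hwx, lt_trans hw2 (lt_of_lt_of_le hz.2 hy.2)⟩, ?_⟩
          rw [hdata.1, hdata.2.1]
          exact hsi
      -- derive contradiction from constancy on [w1, w2]
      obtain ⟨hgs12, hgi12, hgL12, hgR12⟩ := gap_congr (F := F) hint h12.le hn1 hn2 hbet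
      have hne1 : gs Δ w1 ≠ gi Δ w1 := ne_of_lt hsi1
      have hne2 : gs Δ w2 ≠ gi Δ w2 := by rw [← hgs12, ← hgi12]; exact hne1
      have e1 := gphi_gap_lt (F := F) hn1 hne1
      have e2 := gphi_gap_lt (F := F) hn2 hne2
      rw [← hgs12, ← hgi12, ← hgL12, ← hgR12] at e2
      have hv : gphi Δ F w1 = gphi Δ F w2 := by
        rw [hconst w1 hw1M, hconst w2 hw2M]
      rw [e1, e2] at hv
      have hipos : 0 < gi Δ w1 - gs Δ w1 := sub_pos.mpr hsi1
      have hLR : gL Δ F w1 < gR Δ F w1 := c4 w1 h01 hn1 hsi1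
      have hd : (w1 - gs Δ w1)/(gi Δ w1 - gs Δ w1) < (w2 - gs Δ w1)/(gi Δ w1 - gs Δ w1) :=
        (div_lt_div_iff_of_pos_right hipos).mpr (sub_lt_sub_right h12 _)
      nlinarith
  -- assemble: both x and y lie in the interval containing the midpoint
  obtain ⟨J, hJ, hz0⟩ := hcont ((x+y)/2) ⟨by linarith, by linarith⟩
  have hz0m := (mem_ivl_iff hint hJ).mp hz0
  have ha : sInf J ≤ x := by
    by_contra hc
    push_neg at hc
    have hinfy : sInf J < y := lt_of_le_of_lt hz0m.1 (by linarith)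
    obtain ⟨J1, hJ1, hz1⟩ := hcont ((x + sInf J)/2) ⟨by linarith, by linarith⟩
    have hz1m := (mem_ivl_iff hint hJ1).mp hz1
    have hne : J1 ≠ J := by
      rintro rfl
      linarith [hz1m.1]
    have hLT : IntLT J1 J := by
      rcases ivl_tricho hint hdisj hJ1 hJ hne with h | h
      · exact h
      · exact absurd (h _ hz0 _ hz1) (not_lt.mpr (by linarith [hz0m.1]))
    have hF1 : gphi Δ F ((x + sInf J)/2) = F J1 := gphi_eq_of_mem hdisj hJ1 hz1
    have hF2 : gphi Δ F (sInf J) = F J := gphi_eq_of_mem hdisj hJ (sInf_mem_ivl hint hJ)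
    have hc1 : gphi Δ F ((x + sInf J)/2) = gphi Δ F x :=
      hconst _ ⟨by linarith, by linarith⟩
    have hc2 : gphi Δ F (sInf J) = gphi Δ F x :=
      hconst _ ⟨hc.le, hinfy.le⟩
    have := (hFord J1 hJ1 J hJ).mp hLT
    rw [← hF1, ← hF2, hc1, hc2] at this
    exact lt_irrefl _ this
  have hb : y ≤ sSup J := by
    by_contra hc
    push_neg at hc
    have hsupx : x < sSup J := lt_of_lt_of_le (by linarith) hz0m.2
    obtain ⟨J1, hJ1, hz1⟩ := hcont ((sSup J + y)/2) ⟨by linarith, by linarith⟩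
    have hz1m := (mem_ivl_iff hint hJ1).mp hz1
    have hne : J1 ≠ J := by
      rintro rfl
      linarith [hz1m.2]
    have hLT : IntLT J J1 := by
      rcases ivl_tricho hint hdisj hJ hJ1 (Ne.symm hne) with h | h
      · exact h
      · exact absurd (h _ hz1 _ hz0) (not_lt.mpr (by linarith [hz0m.2]))
    have hF1 : gphi Δ F ((sSup J + y)/2) = F J1 := gphi_eq_of_mem hdisj hJ1 hz1
    have hF2 : gphi Δ F (sSup J) = F J := gphi_eq_of_mem hdisj hJ (sSup_mem_ivl hint hJ)
    have hc1 : gphi Δ F ((sSup J + y)/2) = gphi Δ F x :=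
      hconst _ ⟨by linarith, by linarith⟩
    have hc2 : gphi Δ F (sSup J) = gphi Δ F x :=
      hconst _ ⟨hsupx.le, hc.le⟩
    have := (hFord J hJ J1 hJ1).mp hLT
    rw [← hF1, ← hF2, hc1, hc2] at this
    exact lt_irrefl _ this
  exact ⟨J, hJ, (mem_ivl_iff hint hJ).mpr ⟨ha, le_trans hxy.le hb⟩,
    (mem_ivl_iff hint hJ).mpr ⟨le_trans ha hxy.le, hb⟩⟩

end StopSets
section Surj

variable {Δ : Set (Set ℝ)} {F : Set ℝ → ℝ}

theorem gphi_surj (hint : IntHyp Δ) (hdisj : Δ.Pairwise Disjoint) (hF : FHyp Δ F)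
    (hFord : OrdHyp Δ F)
    (c1 : ∀ J ∈ Δ, sInf J = sSup0 {x | ∃ J' ∈ Δ, IntLT J' J ∧ x = sSup J'} →
      F J = sSup0 {x | ∃ J' ∈ Δ, IntLT J' J ∧ x = F J'})
    (c2 : ∀ J ∈ Δ, sSup J = sInf1 {x | ∃ J' ∈ Δ, IntLT J J' ∧ x = sInf J'} →
      F J = sInf1 {x | ∃ J' ∈ Δ, IntLT J J' ∧ x = F J'})
    (c3 : ∀ z ∈ Set.Ioo (0:ℝ) 1,
      sSup0 {x | ∃ J' ∈ Δ, sSup J' < z ∧ x = sSup J'} =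
        sInf1 {x | ∃ J'' ∈ Δ, z < sInf J'' ∧ x = sInf J''} →
      sSup0 {x | ∃ J' ∈ Δ, sSup J' < z ∧ x = F J'} =
        sInf1 {x | ∃ J'' ∈ Δ, z < sInf J'' ∧ x = F J''})
    (c5 : sInf1 {x | ∃ J ∈ Δ, x = sInf J} = 0 → sInf1 {x | ∃ J ∈ Δ, x = F J} = 0)
    (c7 : sSup0 {x | ∃ J ∈ Δ, x = sSup J} = 1 → sSup0 {x | ∃ J ∈ Δ, x = F J} = 1) :
    Set.SurjOn (gphi Δ F) (Set.Icc (0:ℝ) 1) (Set.Icc (0:ℝ) 1) := by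
  intro y hy
  rw [Set.mem_image]
  by_cases hyC : ∃ J ∈ Δ, F J = y
  · obtain ⟨J, hJ, hFJ⟩ := hyC
    exact ⟨sInf J, ivl_subset_unit hint hJ (sInf_mem_ivl hint hJ),
      by rw [gphi_eq_of_mem hdisj hJ (sInf_mem_ivl hint hJ)]; exact hFJ⟩
  · have hyn : ∀ J ∈ Δ, F J ≠ y := fun J hJ h => hyC ⟨J, hJ, h⟩
    have htri : ∀ J ∈ Δ, F J < y ∨ y < F J := fun J hJ => (hyn J hJ).lt_or_gt
    set Sstar : ℝ := sSup0 {x | ∃ J ∈ Δ, F J < y ∧ x = sSup J} with hSdef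
    set Istar : ℝ := sInf1 {x | ∃ J ∈ Δ, y < F J ∧ x = sInf J} with hIdef
    set Lstar : ℝ := sSup0 {x | ∃ J ∈ Δ, F J < y ∧ x = F J} with hLdef
    set Rstar : ℝ := sInf1 {x | ∃ J ∈ Δ, y < F J ∧ x = F J} with hRdef
    have hsup_le : ∀ J ∈ Δ, F J < y → sSup J ≤ Sstar := fun J hJ h =>
      le_sSup0 (fun x hx =>
        (mem_setOf_bounds (ivl_endpoint_bounds hint (Or.inr rfl)) x hx).2) ⟨J, hJ, h, rfl⟩
    have hinf_ge : ∀ J ∈ Δ, y < F J → Istar ≤ sInf J := fun J hJ h =>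
      sInf1_le (fun x hx =>
        (mem_setOf_bounds (ivl_endpoint_bounds hint (Or.inl rfl)) x hx).1) ⟨J, hJ, h, rfl⟩
    have hFL : ∀ J ∈ Δ, F J < y → F J ≤ Lstar := fun J hJ h =>
      le_sSup0 (fun x hx => (mem_setOf_bounds hF x hx).2) ⟨J, hJ, h, rfl⟩
    have hRF : ∀ J ∈ Δ, y < F J → Rstar ≤ F J := fun J hJ h =>
      sInf1_le (fun x hx => (mem_setOf_bounds hF x hx).1) ⟨J, hJ, h, rfl⟩
    have hS0 : 0 ≤ Sstar := sSup0_nonneg fun x hx =>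
      (mem_setOf_bounds (ivl_endpoint_bounds hint (Or.inr rfl)) x hx).1
    have hS1 : Sstar ≤ 1 := sSup0_le zero_le_one fun x hx =>
      (mem_setOf_bounds (ivl_endpoint_bounds hint (Or.inr rfl)) x hx).2
    have hI0 : 0 ≤ Istar := le_sInf1 zero_le_one fun x hx =>
      (mem_setOf_bounds (ivl_endpoint_bounds hint (Or.inl rfl)) x hx).1
    have hI1 : Istar ≤ 1 := sInf1_le_one
      (fun x hx => (mem_setOf_bounds (ivl_endpoint_bounds hint (Or.inl rfl)) x hx).1)
      (fun x hx => (mem_setOf_bounds (ivl_endpoint_bounds hint (Or.inl rfl)) x hx).2)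
    have hLy : Lstar ≤ y := sSup0_le hy.1 (by rintro x ⟨J, hJ, h, rfl⟩; exact h.le)
    have hyR : y ≤ Rstar := le_sInf1 hy.2 (by rintro x ⟨J, hJ, h, rfl⟩; exact h.le)
    have hSI : Sstar ≤ Istar := by
      apply sSup0_le hI0
      rintro x ⟨J, hJ, h, rfl⟩
      apply le_sInf1 (ivl_spec hint hJ).2.2.1
      rintro x ⟨J'', hJ'', h'', rfl⟩
      exact (endpoints_of_intLT hint hJ hJ''
        ((hFord J hJ J'' hJ'').mpr (lt_trans h h''))).le
    -- the common "gap data" identification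
    have claim_sets : ∀ t : ℝ, Sstar ≤ t → t ≤ Istar → (∀ J ∈ Δ, t ∉ J) →
        gs Δ t = Sstar ∧ gi Δ t = Istar ∧ gL Δ F t = Lstar ∧ gR Δ F t = Rstar := by
      intro t h1 h2 hnt
      have iffA : ∀ J ∈ Δ, (sSup J < t ↔ F J < y) := by
        intro J hJ
        constructor
        · intro h
          rcases htri J hJ with h' | h'
          · exact h'
          · exact absurd (lt_of_lt_of_le h (le_trans h2 (hinf_ge J hJ h')))
              (not_lt.mpr (ivl_spec hint hJ).2.1.le)
        · intro h
          exact lt_of_le_of_ne (le_trans (hsup_le J hJ h) h1)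
            (fun he => hnt J hJ (he ▸ sSup_mem_ivl hint hJ))
      have iffB : ∀ J ∈ Δ, (t < sInf J ↔ y < F J) := by
        intro J hJ
        constructor
        · intro h
          rcases htri J hJ with h' | h'
          · exact absurd (lt_of_le_of_lt (le_trans (hsup_le J hJ h') h1) h)
              (not_lt.mpr (ivl_spec hint hJ).2.1.le)
          · exact h'
        · intro h
          exact lt_of_le_of_ne (le_trans h2 (hinf_ge J hJ h))
            (fun he => hnt J hJ (he.symm ▸ sInf_mem_ivl hint hJ))
      exact ⟨congrArg sSup0 (set_congr iffA sSup), congrArg sInf1 (set_congr iffB sInf),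
        congrArg sSup0 (set_congr iffA F), congrArg sInf1 (set_congr iffB F)⟩
    rcases eq_or_lt_of_le hSI with hm | hm
    · -- Sstar = Istar =: m, accumulation point
      have hmn : ∀ J ∈ Δ, Sstar ∉ J := by
        intro J hJ hmem
        rcases htri J hJ with hA | hB
        · -- F J < y : contradiction via c2
          have hsupm : sSup J = Sstar :=
            le_antisymm (hsup_le J hJ hA) ((mem_ivl_iff hint hJ).mp hmem).2
          have iffC : ∀ J' ∈ Δ, (IntLT J J' ↔ y < F J') := by
            intro J' hJ'
            constructor
            · intro h
              rcases htri J' hJ' with h' | h'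
              · exfalso
                have e1 := endpoints_of_intLT hint hJ hJ' h
                have e2 := (ivl_spec hint hJ').2.1.le
                have e3 := hsup_le J' hJ' h'
                rw [hsupm] at e1
                linarith
              · exact h'
            · intro h'
              have hge : sSup J ≤ sInf J' := by
                rw [hsupm, hm]
                exact hinf_ge J' hJ' h'
              rcases eq_or_lt_of_le hge with heq | hlt
              · exfalso
                have hmem' : sSup J ∈ J' := heq ▸ sInf_mem_ivl hint hJ'
                have := ivl_unique hdisj hJ hJ' (sSup_mem_ivl hint hJ) hmem'
                subst this
                exact absurd (lt_trans hA h') (lt_irrefl _)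
              · exact intLT_of_endpoints hint hJ hJ' hlt
          have hhyp : sSup J = sInf1 {x | ∃ J' ∈ Δ, IntLT J J' ∧ x = sInf J'} := by
            rw [set_congr iffC sInf, hsupm, hm]
          have hconc := c2 J hJ hhyp
          rw [set_congr iffC F] at hconc
          exact absurd hconc (ne_of_lt (lt_of_lt_of_le hA hyR))
        · -- y < F J : contradiction via c1
          have hinfm : sInf J = Sstar :=
            le_antisymm ((mem_ivl_iff hint hJ).mp hmem).1 (hm ▸ hinf_ge J hJ hB)
          have iffC : ∀ J' ∈ Δ, (IntLT J' J ↔ F J' < y) := by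
            intro J' hJ'
            constructor
            · intro h
              rcases htri J' hJ' with h' | h'
              · exact h'
              · exfalso
                have e1 := endpoints_of_intLT hint hJ' hJ h
                have e2 := (ivl_spec hint hJ').2.1.le
                have e3 := hm ▸ hinf_ge J' hJ' h'
                rw [hinfm] at e1
                linarith
            · intro h'
              have hge : sSup J' ≤ sInf J := by
                rw [hinfm]
                exact hsup_le J' hJ' h'
              rcases eq_or_lt_of_le hge with heq | hlt
              · exfalso
                have hmem' : sSup J' ∈ J := heq ▸ sInf_mem_ivl hint hJ
                have := ivl_unique hdisj hJ' hJ (sSup_mem_ivl hint hJ') hmem'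
                subst this
                exact absurd (lt_trans h' hB) (lt_irrefl _)
              · exact intLT_of_endpoints hint hJ' hJ hlt
          have hhyp : sInf J = sSup0 {x | ∃ J' ∈ Δ, IntLT J' J ∧ x = sSup J'} := by
            rw [set_congr iffC sSup, hinfm]
          have hconc := c1 J hJ hhyp
          rw [set_congr iffC F] at hconc
          exact absurd hconc (ne_of_gt (lt_of_le_of_lt hLy hB))
      obtain ⟨hgs, hgi, hgL, hgR⟩ := claim_sets Sstar le_rfl (le_of_eq hm) hmn
      have hphi : gphi Δ F Sstar = Lstar := by
        rw [gphi_gap_eqc hmn (by rw [hgs, hgi, hm]), hgL]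
      rcases eq_or_lt_of_le hS0 with h0 | h0
      · -- Sstar = 0 : use c5
        have hAempty : ∀ J ∈ Δ, ¬(F J < y) := by
          intro J hJ h
          have e1 := hsup_le J hJ h
          obtain ⟨a1, a2, _, _⟩ := ivl_spec hint hJ
          rw [← h0] at e1
          linarith
        have hall : ∀ J ∈ Δ, y < F J := fun J hJ => (htri J hJ).resolve_left (hAempty J hJ)
        have hLz : Lstar = 0 := by
          rw [hLdef]
          have : {x | ∃ J ∈ Δ, F J < y ∧ x = F J} = (∅ : Set ℝ) := by
            ext x
            simp only [Set.mem_setOf_eq, Set.mem_empty_iff_false, iff_false]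
            rintro ⟨J, hJ, h, rfl⟩
            exact hAempty J hJ h
          rw [this, sSup0_empty]
        have h5 : sInf1 {x | ∃ J ∈ Δ, x = sInf J} = 0 := by
          rw [← set_all_of hall sInf, ← hIdef, ← hm, ← h0]
        have hRz : Rstar = 0 := by
          rw [hRdef, set_all_of hall F]
          exact c5 h5
        have hy0 : y = 0 := le_antisymm (hRz ▸ hyR) hy.1
        exact ⟨Sstar, ⟨hS0, hS1⟩, by rw [hphi, hLz, hy0]⟩
      · rcases eq_or_lt_of_le hS1 with h1 | h1
        · -- Sstar = 1 : use c7
          have hBempty : ∀ J ∈ Δ, ¬(y < F J) := by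
            intro J hJ h
            have e1 := hinf_ge J hJ h
            obtain ⟨_, a2, a3, _⟩ := ivl_spec hint hJ
            rw [← hm, h1] at e1
            linarith
          have hall : ∀ J ∈ Δ, F J < y := fun J hJ => (htri J hJ).resolve_right (hBempty J hJ)
          have h7 : sSup0 {x | ∃ J ∈ Δ, x = sSup J} = 1 := by
            rw [← set_all_of hall sSup, ← hSdef]
            exact h1
          have hL1 : Lstar = 1 := by
            rw [hLdef, set_all_of hall F]
            exact c7 h7
          have hy1 : y = 1 := le_antisymm hy.2 (hL1 ▸ hLy)
          exact ⟨Sstar, ⟨hS0, hS1⟩, by rw [hphi, hL1, hy1]⟩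
        · -- 0 < Sstar < 1 : use c3
          have hhyp : gs Δ Sstar = gi Δ Sstar := by rw [hgs, hgi, hm]
          have h3 := c3 Sstar ⟨h0, h1⟩ hhyp
          have hLR : Lstar = Rstar := by
            rw [← hgL, ← hgR]
            exact h3
          have hyL : y = Lstar := le_antisymm (by rw [hLR]; exact hyR) hLy
          exact ⟨Sstar, ⟨hS0, hS1⟩, by rw [hphi, hyL]⟩
    · -- Sstar < Istar : a genuine gap
      rcases eq_or_lt_of_le hLy with hyL | hyL
      · -- y = Lstar : use the left end of the gap
        have hmn : ∀ J ∈ Δ, Sstar ∉ J := by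
          intro J hJ hmem
          rcases htri J hJ with hA | hB
          · have hsupm : sSup J = Sstar :=
              le_antisymm (hsup_le J hJ hA) ((mem_ivl_iff hint hJ).mp hmem).2
            have hmax : ∀ J' ∈ Δ, F J' < y → F J' ≤ F J := by
              intro J' hJ' h'
              rcases eq_or_ne J' J with rfl | hne
              · exact le_rfl
              rcases ivl_tricho hint hdisj hJ' hJ hne with h | h
              · exact ((hFord J' hJ' J hJ).mp h).le
              · exfalso
                have e1 := endpoints_of_intLT hint hJ hJ' h
                have e2 := (ivl_spec hint hJ').2.1.le
                have e3 := hsup_le J' hJ' h'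
                rw [hsupm] at e1
                linarith
            have hLF : Lstar ≤ F J := sSup0_le (hF J hJ).1
              (by rintro x ⟨J', hJ', h', rfl⟩; exact hmax J' hJ' h')
            exact hyn J hJ (le_antisymm (hyL ▸ hFL J hJ hA) (hyL ▸ hLF))
          · have e1 := hinf_ge J hJ hB
            have e2 := ((mem_ivl_iff hint hJ).mp hmem).1
            linarith
        obtain ⟨hgs, hgi, hgL, hgR⟩ := claim_sets Sstar le_rfl hm.le hmn
        have hne : gs Δ Sstar ≠ gi Δ Sstar := by rw [hgs, hgi]; exact ne_of_lt hm
        have hphi := gphi_gap_lt (F := F) hmn hne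
        rw [hgs, hgL, hgR] at hphi
        refine ⟨Sstar, ⟨hS0, hS1⟩, ?_⟩
        rw [hphi, sub_self, zero_div, mul_zero, add_zero, hyL]
      · rcases eq_or_lt_of_le hyR with hyR' | hyR'
        · -- y = Rstar : use the right end of the gap
          have hmn : ∀ J ∈ Δ, Istar ∉ J := by
            intro J hJ hmem
            rcases htri J hJ with hA | hB
            · have e1 := hsup_le J hJ hA
              have e2 := ((mem_ivl_iff hint hJ).mp hmem).2
              linarith
            · have hinfm : sInf J = Istar :=
                le_antisymm ((mem_ivl_iff hint hJ).mp hmem).1 (hinf_ge J hJ hB)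
              have hmin : ∀ J' ∈ Δ, y < F J' → F J ≤ F J' := by
                intro J' hJ' h'
                rcases eq_or_ne J' J with rfl | hne
                · exact le_rfl
                rcases ivl_tricho hint hdisj hJ hJ' (Ne.symm hne) with h | h
                · exact ((hFord J hJ J' hJ').mp h).le
                · exfalso
                  have e1 := endpoints_of_intLT hint hJ' hJ h
                  have e2 := (ivl_spec hint hJ').2.1.le
                  have e3 := hinf_ge J' hJ' h'
                  rw [hinfm] at e1
                  linarith
              have hFR : F J ≤ Rstar := le_sInf1 (hF J hJ).2
                (by rintro x ⟨J', hJ', h', rfl⟩; exact hmin J' hJ' h')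
              exact hyn J hJ (le_antisymm (hyR' ▸ hFR) (hyR' ▸ hRF J hJ hB))
          obtain ⟨hgs, hgi, hgL, hgR⟩ := claim_sets Istar hm.le le_rfl hmn
          have hne : gs Δ Istar ≠ gi Δ Istar := by rw [hgs, hgi]; exact ne_of_lt hm
          have hphi := gphi_gap_lt (F := F) hmn hne
          rw [hgs, hgi, hgL, hgR] at hphi
          refine ⟨Istar, ⟨hI0, hI1⟩, ?_⟩
          rw [hphi, div_self (ne_of_gt (sub_pos.mpr hm)), mul_one, add_sub_cancel]
          exact hyR'.symm
        · -- Lstar < y < Rstar : interior of the gap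
          have hRL : 0 < Rstar - Lstar := by linarith
          have hIS : 0 < Istar - Sstar := sub_pos.mpr hm
          set r : ℝ := (y - Lstar)/(Rstar - Lstar) with hrdef
          have hr0 : 0 < r := div_pos (by linarith) hRL
          have hr1 : r < 1 := (div_lt_one hRL).mpr (by linarith)
          set t : ℝ := Sstar + (Istar - Sstar) * r with htdef
          have hts : Sstar < t := by nlinarith
          have hti : t < Istar := by nlinarith
          have hnt : ∀ J ∈ Δ, t ∉ J := by
            intro J hJ hmem
            have h2 := (mem_ivl_iff hint hJ).mp hmem
            rcases htri J hJ with hA | hB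
            · have := hsup_le J hJ hA; linarith
            · have := hinf_ge J hJ hB; linarith
          obtain ⟨hgs, hgi, hgL, hgR⟩ := claim_sets t hts.le hti.le hnt
          have hne : gs Δ t ≠ gi Δ t := by rw [hgs, hgi]; exact ne_of_lt hm
          have hphi := gphi_gap_lt (F := F) hnt hne
          rw [hgs, hgi, hgL, hgR] at hphi
          have harith : (t - Sstar)/(Istar - Sstar) = r := by
            rw [htdef, add_sub_cancel_left, mul_div_cancel_left₀ _ (ne_of_gt hIS)]
          have ht01 : t ∈ Set.Icc (0:ℝ) 1 := ⟨le_trans hS0 hts.le, le_trans hti.le hI1⟩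
          refine ⟨t, ht01, ?_⟩
          rw [hphi, harith, hrdef, mul_div_cancel₀ _ (ne_of_gt hRL)]
          ring

end Surj
section Cont

variable {Δ : Set (Set ℝ)} {F : Set ℝ → ℝ}

theorem le_of_forall_eps {a b : ℝ} (h : ∀ ε : ℝ, 0 < ε → a ≤ b + ε) : a ≤ b := by
  by_contra hc
  push_neg at hc
  have := h ((a - b)/2) (by linarith)
  linarith

theorem gphi_mem_unit (hint : IntHyp Δ) (hdisj : Δ.Pairwise Disjoint) (hF : FHyp Δ F)
    (hFord : OrdHyp Δ F) {t : ℝ} (ht : t ∈ Set.Icc (0:ℝ) 1) :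
    gphi Δ F t ∈ Set.Icc (0:ℝ) 1 := by
  by_cases hm : ∃ J ∈ Δ, t ∈ J
  · obtain ⟨J, hJ, htJ⟩ := hm
    rw [gphi_eq_of_mem hdisj hJ htJ]
    exact ⟨(hF J hJ).1, (hF J hJ).2⟩
  · have hn := not_exists_mem_ivl hm
    obtain ⟨h1, h2⟩ := gphi_gap_bounds hint hF hFord ht.1 ht.2 hn
    exact ⟨le_trans (gL_nonneg hF t) h1, le_trans h2 (gR_le_one hF t)⟩

/-- extension of `gphi` to all of `ℝ` -/
noncomputable def gpsi (Δ : Set (Set ℝ)) (F : Set ℝ → ℝ) (t : ℝ) : ℝ :=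
  if t < 0 then t else if 1 < t then t else gphi Δ F t

theorem gpsi_eq_on (t : ℝ) (ht : t ∈ Set.Icc (0:ℝ) 1) : gpsi Δ F t = gphi Δ F t := by
  unfold gpsi
  rw [if_neg (not_lt.mpr ht.1), if_neg (not_lt.mpr ht.2)]

theorem gpsi_mono (hint : IntHyp Δ) (hdisj : Δ.Pairwise Disjoint) (hF : FHyp Δ F)
    (hFord : OrdHyp Δ F)
    (h0 : gphi Δ F 0 = 0) (h1 : gphi Δ F 1 = 1) : Monotone (gpsi Δ F) := by
  have hmono := gphi_mono hint hdisj hF hFord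
  have hmem : ∀ t ∈ Set.Icc (0:ℝ) 1, gphi Δ F t ∈ Set.Icc (0:ℝ) 1 :=
    fun t ht => gphi_mem_unit hint hdisj hF hFord ht
  intro a b hab
  unfold gpsi
  rcases lt_or_ge a 0 with ha | ha
  · rw [if_pos ha]
    rcases lt_or_ge b 0 with hb | hb
    · rw [if_pos hb]; exact hab
    · rw [if_neg (not_lt.mpr hb)]
      rcases lt_or_ge 1 b with hb1 | hb1
      · rw [if_pos hb1]; linarith
      · rw [if_neg (not_lt.mpr hb1)]
        exact le_trans ha.le (hmem b ⟨hb, hb1⟩).1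
  · rw [if_neg (not_lt.mpr (le_trans ha hab))]
    rcases lt_or_ge 1 b with hb1 | hb1
    · rw [if_pos hb1, if_neg (not_lt.mpr ha)]
      rcases lt_or_ge 1 a with ha1 | ha1
      · rw [if_pos ha1]; exact hab
      · rw [if_neg (not_lt.mpr ha1)]
        exact le_trans (hmem a ⟨ha, ha1⟩).2 hb1.le
    · have ha1 : a ≤ 1 := le_trans hab hb1
      rw [if_neg (not_lt.mpr ha), if_neg (not_lt.mpr ha1), if_neg (not_lt.mpr hb1)]
      exact hmono ⟨ha, ha1⟩ ⟨le_trans ha hab, hb1⟩ hab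

theorem gpsi_surj (hsurj : Set.SurjOn (gphi Δ F) (Set.Icc (0:ℝ) 1) (Set.Icc (0:ℝ) 1)) :
    Function.Surjective (gpsi Δ F) := by
  intro y
  rcases lt_or_ge y 0 with hy | hy
  · exact ⟨y, by unfold gpsi; rw [if_pos hy]⟩
  rcases lt_or_ge 1 y with hy1 | hy1
  · exact ⟨y, by
      unfold gpsi
      rw [if_neg (not_lt.mpr (le_trans zero_le_one hy1.le)), if_pos hy1]⟩
  · obtain ⟨t, ht, htv⟩ := hsurj (Set.mem_Icc.mpr ⟨hy, hy1⟩)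
    exact ⟨t, by rw [gpsi_eq_on t ht]; exact htv⟩

theorem gphi_contOn (hint : IntHyp Δ) (hdisj : Δ.Pairwise Disjoint) (hF : FHyp Δ F)
    (hFord : OrdHyp Δ F) (h0 : gphi Δ F 0 = 0) (h1 : gphi Δ F 1 = 1)
    (hsurj : Set.SurjOn (gphi Δ F) (Set.Icc (0:ℝ) 1) (Set.Icc (0:ℝ) 1)) :
    ContinuousOn (gphi Δ F) (Set.Icc 0 1) := by
  have hc : Continuous (gpsi Δ F) :=
    (gpsi_mono hint hdisj hF hFord h0 h1).continuous_of_surjective (gpsi_surj hsurj)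
  exact (hc.continuousOn).congr fun t ht => (gpsi_eq_on t ht).symm

theorem backward_direction (hint : IntHyp Δ) (hdisj : Δ.Pairwise Disjoint) (hF : FHyp Δ F)
    (hFord : OrdHyp Δ F) (hcond :
      (∀ J ∈ Δ, sInf J = sSup0 {x | ∃ J' ∈ Δ, IntLT J' J ∧ x = sSup J'} →
        F J = sSup0 {x | ∃ J' ∈ Δ, IntLT J' J ∧ x = F J'}) ∧
      (∀ J ∈ Δ, sSup J = sInf1 {x | ∃ J' ∈ Δ, IntLT J J' ∧ x = sInf J'} →
        F J = sInf1 {x | ∃ J' ∈ Δ, IntLT J J' ∧ x = F J'}) ∧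
      (∀ z ∈ Set.Ioo (0:ℝ) 1,
        sSup0 {x | ∃ J' ∈ Δ, sSup J' < z ∧ x = sSup J'} =
          sInf1 {x | ∃ J'' ∈ Δ, z < sInf J'' ∧ x = sInf J''} →
        sSup0 {x | ∃ J' ∈ Δ, sSup J' < z ∧ x = F J'} =
          sInf1 {x | ∃ J'' ∈ Δ, z < sInf J'' ∧ x = F J''}) ∧
      (∀ z ∈ Set.Ioo (0:ℝ) 1, (∀ J ∈ Δ, z ∉ J) →
        sSup0 {x | ∃ J' ∈ Δ, sSup J' < z ∧ x = sSup J'} <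
          sInf1 {x | ∃ J'' ∈ Δ, z < sInf J'' ∧ x = sInf J''} →
        sSup0 {x | ∃ J' ∈ Δ, sSup J' < z ∧ x = F J'} <
          sInf1 {x | ∃ J'' ∈ Δ, z < sInf J'' ∧ x = F J''}) ∧
      (sInf1 {x | ∃ J ∈ Δ, x = sInf J} = 0 → sInf1 {x | ∃ J ∈ Δ, x = F J} = 0) ∧
      ((∀ J ∈ Δ, (0:ℝ) ∉ J) → 0 < sInf1 {x | ∃ J ∈ Δ, x = sInf J} →
        0 < sInf1 {x | ∃ J ∈ Δ, x = F J}) ∧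
      (sSup0 {x | ∃ J ∈ Δ, x = sSup J} = 1 → sSup0 {x | ∃ J ∈ Δ, x = F J} = 1) ∧
      ((∀ J ∈ Δ, (1:ℝ) ∉ J) → sSup0 {x | ∃ J ∈ Δ, x = sSup J} < 1 →
        sSup0 {x | ∃ J ∈ Δ, x = F J} < 1)) :
    ∃ φ : ℝ → ℝ,
      (ContinuousOn φ (Set.Icc 0 1) ∧ MonotoneOn φ (Set.Icc 0 1) ∧
        Set.MapsTo φ (Set.Icc 0 1) (Set.Icc 0 1) ∧ φ 0 = 0 ∧ φ 1 = 1) ∧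
      {J | ∃ t : ℝ, Set.Icc 0 1 ∩ φ ⁻¹' {t} = J ∧ J.Nontrivial} = Δ ∧
      ∀ J ∈ Δ, ∀ t ∈ J, φ t = F J := by
  obtain ⟨c1, c2, c3, c4, c5, c6, c7, c8⟩ := hcond
  have h0 := gphi_zero hint hdisj c1
  have h1 := gphi_one hint hdisj c2 c7
  have hsurj := gphi_surj hint hdisj hF hFord c1 c2 c3 c5 c7
  refine ⟨gphi Δ F, ⟨gphi_contOn hint hdisj hF hFord h0 h1 hsurj,
    gphi_mono hint hdisj hF hFord,
    fun t ht => gphi_mem_unit hint hdisj hF hFord ht, h0, h1⟩, ?_, ?_⟩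
  · ext K
    simp only [Set.mem_setOf_eq]
    constructor
    · rintro ⟨v, hKeq, hKnt⟩
      obtain ⟨x, hxK, y, hyK, hne⟩ := hKnt
      have key : ∀ x y : ℝ, x < y → (x ∈ K) → (y ∈ K) → K ∈ Δ := by
        intro x y hxy hxK hyK
        rw [← hKeq] at hxK hyK
        obtain ⟨hxI, hxv⟩ := hxK
        obtain ⟨hyI, hyv⟩ := hyK
        rw [Set.mem_preimage, Set.mem_singleton_iff] at hxv hyv
        obtain ⟨J, hJ, hxJ, hyJ⟩ := level_mem_delta hint hdisj hF hFord c4 hxI hyI hxy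
          (by rw [hxv, hyv])
        have hFv : F J = v := by rw [← gphi_eq_of_mem (F := F) hdisj hJ hxJ]; exact hxv
        have : K = J := by
          rw [← hKeq, ← hFv]
          exact gphi_level hint hdisj hF hFord c4 c6 c8 hJ
        rw [this]
        exact hJ
      rcases hne.lt_or_gt with h | h
      · exact key x y h hxK hyK
      · exact key y x h hyK hxK
    · intro hK
      refine ⟨F K, gphi_level hint hdisj hF hFord c4 c6 c8 hK, ?_⟩
      obtain ⟨h1', h2', _, h4'⟩ := ivl_spec hint hK
      rw [h4']
      exact ⟨sInf K, Set.left_mem_Icc.mpr h2'.le, sSup K, Set.right_mem_Icc.mpr h2'.le,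
        ne_of_lt h2'⟩
  · exact fun J hJ t ht => gphi_eq_of_mem hdisj hJ ht

end Cont
section Forward

variable {Δ : Set (Set ℝ)} {F : Set ℝ → ℝ} {φ : ℝ → ℝ}

theorem set_empty_of_not {P : Set ℝ → Prop} (h : ¬∃ J ∈ Δ, P J) (f : Set ℝ → ℝ) :
    {x | ∃ J ∈ Δ, P J ∧ x = f J} = ∅ := by
  ext x
  simp only [Set.mem_setOf_eq, Set.mem_empty_iff_false, iff_false]
  rintro ⟨J, hJ, hP, rfl⟩
  exact h ⟨J, hJ, hP⟩

theorem forward_strict (hmono : MonotoneOn φ (Set.Icc 0 1))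
    (hstop2 : ∀ K, (∃ t : ℝ, Set.Icc 0 1 ∩ φ ⁻¹' {t} = K ∧ K.Nontrivial) → K ∈ Δ)
    {z : ℝ} (hz : z ∈ Set.Icc (0:ℝ) 1) (hzn : ∀ J ∈ Δ, z ∉ J)
    {p q : ℝ} (hp : p ∈ Set.Icc (0:ℝ) 1) (hq : q ∈ Set.Icc (0:ℝ) 1)
    (hpz : p ≤ z) (hzq : z ≤ q) (hpq : p < q) : φ p < φ q := by
  rcases eq_or_lt_of_le (hmono hp hq hpq.le) with heq | hlt
  · exfalso
    have hK : ∃ t : ℝ, Set.Icc 0 1 ∩ φ ⁻¹' {t} = Set.Icc 0 1 ∩ φ ⁻¹' {φ p} ∧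
        (Set.Icc 0 1 ∩ φ ⁻¹' {φ p} : Set ℝ).Nontrivial :=
      ⟨φ p, rfl, ⟨p, ⟨hp, rfl⟩, q, ⟨hq, heq.symm⟩, ne_of_lt hpq⟩⟩
    have hKΔ := hstop2 _ hK
    have hzK : z ∈ Set.Icc 0 1 ∩ φ ⁻¹' {φ p} := by
      refine ⟨hz, ?_⟩
      rw [Set.mem_preimage, Set.mem_singleton_iff]
      exact le_antisymm (heq ▸ hmono hz hq hzq) (hmono hp hz hpz)
    exact hzn _ hKΔ hzK
  · exact hlt

theorem phi_le_of_approx (hcont : ContinuousOn φ (Set.Icc 0 1)) {a c : ℝ}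
    (ha : a ∈ Set.Icc (0:ℝ) 1)
    (happ : ∀ δ : ℝ, 0 < δ → ∃ p ∈ Set.Icc (0:ℝ) 1, |p - a| < δ ∧ φ p ≤ c) : φ a ≤ c := by
  apply le_of_forall_eps
  intro ε hε
  have hcw := hcont a ha
  rw [Metric.continuousWithinAt_iff] at hcw
  obtain ⟨δ, hδ, hδp⟩ := hcw ε hε
  obtain ⟨p, hp, hpa, hpc⟩ := happ δ hδ
  have h2 := hδp hp (by rw [Real.dist_eq]; exact hpa)
  rw [Real.dist_eq] at h2
  have h3 := abs_lt.mp h2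
  linarith [h3.1, h3.2]

theorem le_phi_of_approx (hcont : ContinuousOn φ (Set.Icc 0 1)) {a c : ℝ}
    (ha : a ∈ Set.Icc (0:ℝ) 1)
    (happ : ∀ δ : ℝ, 0 < δ → ∃ p ∈ Set.Icc (0:ℝ) 1, |p - a| < δ ∧ c ≤ φ p) : c ≤ φ a := by
  apply le_of_forall_eps
  intro ε hε
  have hcw := hcont a ha
  rw [Metric.continuousWithinAt_iff] at hcw
  obtain ⟨δ, hδ, hδp⟩ := hcw ε hε
  obtain ⟨p, hp, hpa, hpc⟩ := happ δ hδ
  have h2 := hδp hp (by rw [Real.dist_eq]; exact hpa)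
  rw [Real.dist_eq] at h2
  have h3 := abs_lt.mp h2
  linarith [h3.1, h3.2]

end Forward
section ForwardMain

variable {Δ : Set (Set ℝ)} {F : Set ℝ → ℝ} {φ : ℝ → ℝ}

theorem forward_direction (hint : IntHyp Δ) (hF : FHyp Δ F) (hFord : OrdHyp Δ F)
    (hcont : ContinuousOn φ (Set.Icc 0 1)) (hmono : MonotoneOn φ (Set.Icc 0 1))
    (hmaps : Set.MapsTo φ (Set.Icc 0 1) (Set.Icc 0 1)) (h0 : φ 0 = 0) (h1 : φ 1 = 1)
    (hstop2 : ∀ K, (∃ t : ℝ, Set.Icc 0 1 ∩ φ ⁻¹' {t} = K ∧ K.Nontrivial) → K ∈ Δ)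
    (hval : ∀ J ∈ Δ, ∀ t ∈ J, φ t = F J) :
      (∀ J ∈ Δ, sInf J = sSup0 {x | ∃ J' ∈ Δ, IntLT J' J ∧ x = sSup J'} →
        F J = sSup0 {x | ∃ J' ∈ Δ, IntLT J' J ∧ x = F J'}) ∧
      (∀ J ∈ Δ, sSup J = sInf1 {x | ∃ J' ∈ Δ, IntLT J J' ∧ x = sInf J'} →
        F J = sInf1 {x | ∃ J' ∈ Δ, IntLT J J' ∧ x = F J'}) ∧
      (∀ z ∈ Set.Ioo (0:ℝ) 1,
        sSup0 {x | ∃ J' ∈ Δ, sSup J' < z ∧ x = sSup J'} =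
          sInf1 {x | ∃ J'' ∈ Δ, z < sInf J'' ∧ x = sInf J''} →
        sSup0 {x | ∃ J' ∈ Δ, sSup J' < z ∧ x = F J'} =
          sInf1 {x | ∃ J'' ∈ Δ, z < sInf J'' ∧ x = F J''}) ∧
      (∀ z ∈ Set.Ioo (0:ℝ) 1, (∀ J ∈ Δ, z ∉ J) →
        sSup0 {x | ∃ J' ∈ Δ, sSup J' < z ∧ x = sSup J'} <
          sInf1 {x | ∃ J'' ∈ Δ, z < sInf J'' ∧ x = sInf J''} →
        sSup0 {x | ∃ J' ∈ Δ, sSup J' < z ∧ x = F J'} <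
          sInf1 {x | ∃ J'' ∈ Δ, z < sInf J'' ∧ x = F J''}) ∧
      (sInf1 {x | ∃ J ∈ Δ, x = sInf J} = 0 → sInf1 {x | ∃ J ∈ Δ, x = F J} = 0) ∧
      ((∀ J ∈ Δ, (0:ℝ) ∉ J) → 0 < sInf1 {x | ∃ J ∈ Δ, x = sInf J} →
        0 < sInf1 {x | ∃ J ∈ Δ, x = F J}) ∧
      (sSup0 {x | ∃ J ∈ Δ, x = sSup J} = 1 → sSup0 {x | ∃ J ∈ Δ, x = F J} = 1) ∧
      ((∀ J ∈ Δ, (1:ℝ) ∉ J) → sSup0 {x | ∃ J ∈ Δ, x = sSup J} < 1 →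
        sSup0 {x | ∃ J ∈ Δ, x = F J} < 1) := by
  have hFsup : ∀ J ∈ Δ, φ (sSup J) = F J := fun J hJ => hval J hJ _ (sSup_mem_ivl hint hJ)
  have hFinf : ∀ J ∈ Δ, φ (sInf J) = F J := fun J hJ => hval J hJ _ (sInf_mem_ivl hint hJ)
  have hsupI : ∀ J ∈ Δ, sSup J ∈ Set.Icc (0:ℝ) 1 :=
    fun J hJ => Set.mem_Icc.mpr ((ivl_endpoint_bounds hint (Or.inr rfl)) J hJ)
  have hinfI : ∀ J ∈ Δ, sInf J ∈ Set.Icc (0:ℝ) 1 :=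
    fun J hJ => Set.mem_Icc.mpr ((ivl_endpoint_bounds hint (Or.inl rfl)) J hJ)
  refine ⟨?_, ?_, ?_, ?_, ?_, ?_, ?_, ?_⟩
  · -- condition (1)
    intro J hJ hhyp
    by_cases hA : ∃ J' ∈ Δ, IntLT J' J
    · apply le_antisymm
      · rw [← hFinf J hJ]
        apply phi_le_of_approx hcont (hinfI J hJ)
        intro δ hδ
        obtain ⟨J0, hJ0, hLT0⟩ := hA
        have hpos : 0 < sInf J :=
          lt_trans (lt_of_le_of_lt (ivl_spec hint hJ0).1 (ivl_spec hint hJ0).2.1)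
            (endpoints_of_intLT hint hJ0 hJ hLT0)
        have hy : max (sInf J - δ) 0 < sSup0 {x | ∃ J' ∈ Δ, IntLT J' J ∧ x = sSup J'} := by
          rw [← hhyp]
          exact max_lt (by linarith) hpos
        obtain ⟨x, hx, hyx⟩ := exists_lt_of_lt_sSup0 (le_max_right _ _) hy
        obtain ⟨J', hJ', hLT', rfl⟩ := hx
        refine ⟨sSup J', hsupI J' hJ', ?_, ?_⟩
        · have hub := endpoints_of_intLT hint hJ' hJ hLT'
          have hlb := le_max_left (sInf J - δ) 0
          rw [abs_lt]
          constructor <;> linarith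
        · rw [hFsup J' hJ']
          exact le_sSup0 (fun x hx => (mem_setOf_bounds hF x hx).2) ⟨J', hJ', hLT', rfl⟩
      · apply sSup0_le (hF J hJ).1
        rintro x ⟨J', hJ', hLT', rfl⟩
        exact ((hFord J' hJ' J hJ).mp hLT').le
    · rw [set_empty_of_not hA F, sSup0_empty]
      rw [set_empty_of_not hA sSup, sSup0_empty] at hhyp
      rw [← hFinf J hJ, hhyp, h0]
  · -- condition (2)
    intro J hJ hhyp
    by_cases hA : ∃ J' ∈ Δ, IntLT J J'
    · apply le_antisymm
      · apply le_sInf1 (hF J hJ).2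
        rintro x ⟨J', hJ', hLT', rfl⟩
        exact ((hFord J hJ J' hJ').mp hLT').le
      · rw [← hFsup J hJ]
        apply le_phi_of_approx hcont (hsupI J hJ)
        intro δ hδ
        obtain ⟨J0, hJ0, hLT0⟩ := hA
        have hlt1 : sSup J < 1 :=
          lt_of_lt_of_le (lt_of_lt_of_le (endpoints_of_intLT hint hJ hJ0 hLT0)
            (ivl_spec hint hJ0).2.1.le) (ivl_spec hint hJ0).2.2.1
        have hy : sInf1 {x | ∃ J' ∈ Δ, IntLT J J' ∧ x = sInf J'} < min (sSup J + δ) 1 := by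
          rw [← hhyp]
          exact lt_min (by linarith) hlt1
        obtain ⟨x, hx, hxy⟩ := exists_sInf1_lt (min_le_right _ _) hy
        obtain ⟨J', hJ', hLT', rfl⟩ := hx
        refine ⟨sInf J', hinfI J' hJ', ?_, ?_⟩
        · have hlb := endpoints_of_intLT hint hJ hJ' hLT'
          have hub := min_le_left (sSup J + δ) 1
          rw [abs_lt]
          constructor <;> linarith
        · rw [hFinf J' hJ']
          exact sInf1_le (fun x hx => (mem_setOf_bounds hF x hx).1) ⟨J', hJ', hLT', rfl⟩
    · rw [set_empty_of_not hA F, sInf1_empty]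
      rw [set_empty_of_not hA sInf, sInf1_empty] at hhyp
      rw [← hFsup J hJ, hhyp, h1]
  · -- condition (3)
    intro z hz hhyp
    have hzI : z ∈ Set.Icc (0:ℝ) 1 := ⟨hz.1.le, hz.2.le⟩
    have hSAz : sSup0 {x | ∃ J' ∈ Δ, sSup J' < z ∧ x = sSup J'} ≤ z :=
      sSup0_le hz.1.le (by rintro x ⟨J', hJ', h, rfl⟩; exact h.le)
    have hzSB : z ≤ sInf1 {x | ∃ J'' ∈ Δ, z < sInf J'' ∧ x = sInf J''} :=
      le_sInf1 hz.2.le (by rintro x ⟨J'', hJ'', h, rfl⟩; exact h.le)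
    have hSA : sSup0 {x | ∃ J' ∈ Δ, sSup J' < z ∧ x = sSup J'} = z :=
      le_antisymm hSAz (by rw [hhyp]; exact hzSB)
    have hSB : sInf1 {x | ∃ J'' ∈ Δ, z < sInf J'' ∧ x = sInf J''} = z := by
      rw [← hhyp]; exact hSA
    have hleft_le : sSup0 {x | ∃ J' ∈ Δ, sSup J' < z ∧ x = F J'} ≤ φ z := by
      apply sSup0_le (hmaps hzI).1
      rintro x ⟨J', hJ', h, rfl⟩
      rw [← hFsup J' hJ']
      exact hmono (hsupI J' hJ') hzI h.le
    have hright_ge : φ z ≤ sInf1 {x | ∃ J'' ∈ Δ, z < sInf J'' ∧ x = F J''} := by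
      apply le_sInf1 (hmaps hzI).2
      rintro x ⟨J'', hJ'', h, rfl⟩
      rw [← hFinf J'' hJ'']
      exact hmono hzI (hinfI J'' hJ'') h.le
    have hleft_ge : φ z ≤ sSup0 {x | ∃ J' ∈ Δ, sSup J' < z ∧ x = F J'} := by
      apply phi_le_of_approx hcont hzI
      intro δ hδ
      have hy : max (z - δ) 0 < sSup0 {x | ∃ J' ∈ Δ, sSup J' < z ∧ x = sSup J'} := by
        rw [hSA]; exact max_lt (by linarith) hz.1
      obtain ⟨x, hx, hyx⟩ := exists_lt_of_lt_sSup0 (le_max_right _ _) hy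
      obtain ⟨J', hJ', hlt, rfl⟩ := hx
      refine ⟨sSup J', hsupI J' hJ', ?_, ?_⟩
      · have hlb := le_max_left (z - δ) 0
        rw [abs_lt]
        constructor <;> linarith
      · rw [hFsup J' hJ']
        exact le_sSup0 (fun x hx => (mem_setOf_bounds hF x hx).2) ⟨J', hJ', hlt, rfl⟩
    have hright_le : sInf1 {x | ∃ J'' ∈ Δ, z < sInf J'' ∧ x = F J''} ≤ φ z := by
      apply le_phi_of_approx hcont hzI
      intro δ hδ
      have hy : sInf1 {x | ∃ J'' ∈ Δ, z < sInf J'' ∧ x = sInf J''} < min (z + δ) 1 := by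
        rw [hSB]; exact lt_min (by linarith) hz.2
      obtain ⟨x, hx, hxy⟩ := exists_sInf1_lt (min_le_right _ _) hy
      obtain ⟨J'', hJ'', hlt, rfl⟩ := hx
      refine ⟨sInf J'', hinfI J'' hJ'', ?_, ?_⟩
      · have hub := min_le_left (z + δ) 1
        rw [abs_lt]
        constructor <;> linarith
      · rw [hFinf J'' hJ'']
        exact sInf1_le (fun x hx => (mem_setOf_bounds hF x hx).1) ⟨J'', hJ'', hlt, rfl⟩
    exact le_antisymm (le_trans hleft_le hright_ge) (le_trans hright_le hleft_ge)
  · -- condition (4)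
    intro z hz hzn hhyp
    have hzI : z ∈ Set.Icc (0:ℝ) 1 := ⟨hz.1.le, hz.2.le⟩
    have hSAz : sSup0 {x | ∃ J' ∈ Δ, sSup J' < z ∧ x = sSup J'} ≤ z :=
      sSup0_le hz.1.le (by rintro x ⟨J', hJ', h, rfl⟩; exact h.le)
    have hzSB : z ≤ sInf1 {x | ∃ J'' ∈ Δ, z < sInf J'' ∧ x = sInf J''} :=
      le_sInf1 hz.2.le (by rintro x ⟨J'', hJ'', h, rfl⟩; exact h.le)
    have hSA0 : 0 ≤ sSup0 {x | ∃ J' ∈ Δ, sSup J' < z ∧ x = sSup J'} :=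
      sSup0_nonneg fun x hx =>
        (mem_setOf_bounds (ivl_endpoint_bounds hint (Or.inr rfl)) x hx).1
    have hSB1 : sInf1 {x | ∃ J'' ∈ Δ, z < sInf J'' ∧ x = sInf J''} ≤ 1 :=
      sInf1_le_one
        (fun x hx => (mem_setOf_bounds (ivl_endpoint_bounds hint (Or.inl rfl)) x hx).1)
        (fun x hx => (mem_setOf_bounds (ivl_endpoint_bounds hint (Or.inl rfl)) x hx).2)
    set SA := sSup0 {x | ∃ J' ∈ Δ, sSup J' < z ∧ x = sSup J'} with hSAdef
    set SB := sInf1 {x | ∃ J'' ∈ Δ, z < sInf J'' ∧ x = sInf J''} with hSBdef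
    set p := (SA + z)/2 with hpdef
    set q := (z + SB)/2 with hqdef
    have hp : p ∈ Set.Icc (0:ℝ) 1 := ⟨by rw [hpdef]; linarith, by rw [hpdef]; linarith [hz.2]⟩
    have hq : q ∈ Set.Icc (0:ℝ) 1 := ⟨by rw [hqdef]; linarith [hz.1], by rw [hqdef]; linarith⟩
    have hpq : p < q := by rw [hpdef, hqdef]; linarith
    have hstr : φ p < φ q := forward_strict hmono hstop2 hzI hzn hp hq
      (by rw [hpdef]; linarith) (by rw [hqdef]; linarith) hpq
    have hL : sSup0 {x | ∃ J' ∈ Δ, sSup J' < z ∧ x = F J'} ≤ φ p := by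
      apply sSup0_le (hmaps hp).1
      rintro x ⟨J', hJ', h, rfl⟩
      rw [← hFsup J' hJ']
      apply hmono (hsupI J' hJ') hp
      have : sSup J' ≤ SA := le_sSup0
        (fun x hx => (mem_setOf_bounds (ivl_endpoint_bounds hint (Or.inr rfl)) x hx).2)
        ⟨J', hJ', h, rfl⟩
      rw [hpdef]; linarith
    have hR : φ q ≤ sInf1 {x | ∃ J'' ∈ Δ, z < sInf J'' ∧ x = F J''} := by
      apply le_sInf1 (hmaps hq).2
      rintro x ⟨J'', hJ'', h, rfl⟩
      rw [← hFinf J'' hJ'']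
      apply hmono hq (hinfI J'' hJ'')
      have : SB ≤ sInf J'' := sInf1_le
        (fun x hx => (mem_setOf_bounds (ivl_endpoint_bounds hint (Or.inl rfl)) x hx).1)
        ⟨J'', hJ'', h, rfl⟩
      rw [hqdef]; linarith
    exact lt_of_le_of_lt hL (lt_of_lt_of_le hstr hR)
  · -- condition (5)
    intro hhyp
    apply le_antisymm
    · have hle : sInf1 {x | ∃ J ∈ Δ, x = F J} ≤ φ 0 := by
        apply le_phi_of_approx hcont ⟨le_rfl, zero_le_one⟩
        intro δ hδ
        have hy : sInf1 {x | ∃ J ∈ Δ, x = sInf J} < min δ 1 := by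
          rw [hhyp]; exact lt_min hδ one_pos
        obtain ⟨x, hx, hxy⟩ := exists_sInf1_lt (min_le_right _ _) hy
        obtain ⟨J, hJ, rfl⟩ := hx
        refine ⟨sInf J, hinfI J hJ, ?_, ?_⟩
        · have h2 := (hinfI J hJ).1
          have h3 := min_le_left δ 1
          rw [abs_lt]
          constructor <;> linarith
        · rw [hFinf J hJ]
          exact sInf1_le (by rintro x ⟨J', hJ', rfl⟩; exact (hF J' hJ').1) ⟨J, hJ, rfl⟩
      rw [h0] at hle
      exact hle
    · exact le_sInf1 zero_le_one (by rintro x ⟨J, hJ, rfl⟩; exact (hF J hJ).1)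
  · -- condition (6)
    intro hzn hhyp
    by_cases hne : ∃ J, J ∈ Δ
    · obtain ⟨J0, hJ0⟩ := hne
      set m := sInf1 {x | ∃ J ∈ Δ, x = sInf J} with hmdef
      have hm1 : m ≤ sInf J0 := sInf1_le
        (by rintro x ⟨J, hJ, rfl⟩; exact (ivl_endpoint_bounds hint (Or.inl rfl) J hJ).1)
        ⟨J0, hJ0, rfl⟩
      have hm2 : m < 1 := lt_of_le_of_lt hm1
        (lt_of_lt_of_le (ivl_spec hint hJ0).2.1 (ivl_spec hint hJ0).2.2.1)
      have hp : m/2 ∈ Set.Icc (0:ℝ) 1 := ⟨by linarith, by linarith⟩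
      have hstr : φ 0 < φ (m/2) := forward_strict hmono hstop2 ⟨le_rfl, zero_le_one⟩ hzn
        ⟨le_rfl, zero_le_one⟩ hp le_rfl (by linarith) (by linarith)
      rw [h0] at hstr
      apply lt_of_lt_of_le hstr
      apply le_sInf1 (hmaps hp).2
      rintro x ⟨J, hJ, rfl⟩
      rw [← hFinf J hJ]
      apply hmono hp (hinfI J hJ)
      have : m ≤ sInf J := sInf1_le
        (by rintro x ⟨J', hJ', rfl⟩; exact (ivl_endpoint_bounds hint (Or.inl rfl) J' hJ').1)
        ⟨J, hJ, rfl⟩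
      linarith
    · have he : {x | ∃ J ∈ Δ, x = F J} = (∅ : Set ℝ) := by
        ext x
        simp only [Set.mem_setOf_eq, Set.mem_empty_iff_false, iff_false]
        rintro ⟨J, hJ, rfl⟩
        exact hne ⟨J, hJ⟩
      rw [he, sInf1_empty]
      exact one_pos
  · -- condition (7)
    intro hhyp
    apply le_antisymm
    · exact sSup0_le zero_le_one (by rintro x ⟨J, hJ, rfl⟩; exact (hF J hJ).2)
    · have hle : φ 1 ≤ sSup0 {x | ∃ J ∈ Δ, x = F J} := by
        apply phi_le_of_approx hcont ⟨zero_le_one, le_rfl⟩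
        intro δ hδ
        have hy : max (1 - δ) 0 < sSup0 {x | ∃ J ∈ Δ, x = sSup J} := by
          rw [hhyp]; exact max_lt (by linarith) one_pos
        obtain ⟨x, hx, hyx⟩ := exists_lt_of_lt_sSup0 (le_max_right _ _) hy
        obtain ⟨J, hJ, rfl⟩ := hx
        refine ⟨sSup J, hsupI J hJ, ?_, ?_⟩
        · have h2 := (hsupI J hJ).2
          have h3 := le_max_left (1 - δ) 0
          rw [abs_lt]
          constructor <;> linarith
        · rw [hFsup J hJ]
          exact le_sSup0 (by rintro x ⟨J', hJ', rfl⟩; exact (hF J' hJ').2) ⟨J, hJ, rfl⟩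
      rw [h1] at hle
      exact hle
  · -- condition (8)
    intro hzn hhyp
    by_cases hne : ∃ J, J ∈ Δ
    · obtain ⟨J0, hJ0⟩ := hne
      set s := sSup0 {x | ∃ J ∈ Δ, x = sSup J} with hsdef
      have hs0 : 0 ≤ s := sSup0_nonneg
        (by rintro x ⟨J, hJ, rfl⟩; exact (ivl_endpoint_bounds hint (Or.inr rfl) J hJ).1)
      have hq : (s+1)/2 ∈ Set.Icc (0:ℝ) 1 := ⟨by linarith, by linarith⟩
      have hstr : φ ((s+1)/2) < φ 1 := forward_strict hmono hstop2 ⟨zero_le_one, le_rfl⟩ hzn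
        hq ⟨zero_le_one, le_rfl⟩ (by linarith) le_rfl (by linarith)
      rw [h1] at hstr
      apply lt_of_le_of_lt _ hstr
      apply sSup0_le (hmaps hq).1
      rintro x ⟨J, hJ, rfl⟩
      rw [← hFsup J hJ]
      apply hmono (hsupI J hJ) hq
      have : sSup J ≤ s := le_sSup0
        (by rintro x ⟨J', hJ', rfl⟩; exact (ivl_endpoint_bounds hint (Or.inr rfl) J' hJ').2)
        ⟨J, hJ, rfl⟩
      linarith
    · have he : {x | ∃ J ∈ Δ, x = F J} = (∅ : Set ℝ) := by
        ext x
        simp only [Set.mem_setOf_eq, Set.mem_empty_iff_false, iff_false]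
        rintro ⟨J, hJ, rfl⟩
        exact hne ⟨J, hJ⟩
      rw [he, sSup0_empty]
      exact one_pos

end ForwardMain
/-- Proposition 2 (necessary and sufficient conditions): there is a
reparametrization `φ` whose set of stop intervals is `Δ` and whose stop map is
`F` if and only if conditions (1)–(8) hold. -/
theorem stmt_10 (Δ : Set (Set ℝ)) (C : Set ℝ) (F : Set ℝ → ℝ)
    (hint : ∀ J ∈ Δ, ∃ a b : ℝ, 0 ≤ a ∧ a < b ∧ b ≤ 1 ∧ J = Set.Icc a b)
    (hdisj : Δ.Pairwise Disjoint)
    (hC : C ⊆ Set.Icc 0 1)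
    (hFmem : ∀ J ∈ Δ, F J ∈ C)
    (hFsurj : ∀ c ∈ C, ∃ J ∈ Δ, F J = c)
    (hFord : ∀ J ∈ Δ, ∀ J' ∈ Δ, (IntLT J J' ↔ F J < F J')) :
    (∃ φ : ℝ → ℝ, Reparam φ ∧ {J | IsStopIntervalOf φ J} = Δ ∧
        ∀ J ∈ Δ, ∀ t ∈ J, φ t = F J) ↔
    StopConditions Δ F := by
  have hint' : IntHyp Δ := hint
  have hF : FHyp Δ F := fun J hJ => ⟨(hC (hFmem J hJ)).1, (hC (hFmem J hJ)).2⟩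
  have hFord' : OrdHyp Δ F := hFord
  constructor
  · rintro ⟨φ, ⟨hcont, hmono, hmaps, h0, h1⟩, hstop, hval⟩
    have hstop2 : ∀ K, (∃ t : ℝ, Set.Icc 0 1 ∩ φ ⁻¹' {t} = K ∧ K.Nontrivial) → K ∈ Δ := by
      intro K hK
      rw [← hstop]
      exact hK
    exact forward_direction hint' hF hFord' hcont hmono hmaps h0 h1 hstop2 hval
  · intro hcond
    obtain ⟨φ, hrep, hstop, hval⟩ := backward_direction hint' hdisj hF hFord' hcond
    exact ⟨φ, hrep, hstop, hval⟩
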